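/- arXiv:0901.3897 — 11 statements merged into one kernel-verified Lean document; each statement's English description precedes it below -/
import Mathlib

section
/- A finite simple graph G satisfies WSC if and only if G is a domain. -/
variable {V : Type*} [Fintype V] [DecidableEq V]

/-- For `k ∈ ℕ`, a `k`-cover of `G` is a function from the vertices of `G` to `ℕ` that is
not identically zero and whose values at the two endpoints of any edge sum to at least `k`. -/
def IsCover (G : SimpleGraph V) (k : ℕ) (a : V → ℕ) : Prop :=
  a ≠ 0 ∧ ∀ i j : V, G.Adj i j → k ≤ a i + a j

/-- A `k`-cover is basic if it is not the pointwise sum of a `k`-cover and a `0`-cover. -/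
def IsBasicCover (G : SimpleGraph V) (k : ℕ) (a : V → ℕ) : Prop :=
  IsCover G k a ∧ ¬ ∃ b c : V → ℕ, IsCover G k b ∧ IsCover G 0 c ∧ a = b + c

/-- `G` is a domain if for all `s, t` with `s + t ≥ 1`, the pointwise sum of any `s` basic
`1`-covers and any `t` basic `2`-covers of `G` is a basic `(s + 2t)`-cover. -/
def IsGraphDomain (G : SimpleGraph V) : Prop :=
  ∀ s t : ℕ, 1 ≤ s + t → ∀ f : Fin s → V → ℕ, ∀ g : Fin t → V → ℕ,
    (∀ p, IsBasicCover G 1 (f p)) → (∀ q, IsBasicCover G 2 (g q)) →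
    IsBasicCover G (s + 2 * t) ((∑ p, f p) + (∑ q, g q))

/-- `G` is unmixed if all basic `1`-covers of `G` have the same norm. -/
def IsUnmixed (G : SimpleGraph V) : Prop :=
  ∀ a b : V → ℕ, IsBasicCover G 1 a → IsBasicCover G 1 b → ∑ v, a v = ∑ v, b v

/-- `G` satisfies WSC if it has at least one edge and every non-isolated vertex `i` has a
neighbour `j` such that any neighbour of `i` is adjacent to any neighbour of `j`. -/
def SatisfiesWSC (G : SimpleGraph V) : Prop :=
  (∃ i j : V, G.Adj i j) ∧
    ∀ i : V, (∃ x, G.Adj i x) →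
      ∃ j : V, G.Adj i j ∧ ∀ i' j' : V, G.Adj i i' → G.Adj j j' → G.Adj i' j'

/-- `G` satisfies SC if for every edge `{i, j}`, every neighbour `i'` of `i` and every
neighbour `j'` of `j`, one has `i' ≠ j'` and `{i', j'}` is an edge. -/
def SatisfiesSC (G : SimpleGraph V) : Prop :=
  ∀ i j i' j' : V, G.Adj i j → G.Adj i i' → G.Adj j j' → i' ≠ j' ∧ G.Adj i' j'

/-- `G` satisfies MSC if the set of non-isolated vertices of `G` is nonempty and carries a
perfect matching `M` (a matching of `G` whose vertex set is exactly the set of non-isolated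
vertices) such that for every edge `{i, j}` of `M`, every neighbour `i'` of `i` in `G` and
every neighbour `j'` of `j` in `G`, `{i', j'}` is an edge of `G`. -/
def SatisfiesMSC (G : SimpleGraph V) : Prop :=
  ∃ M : G.Subgraph, M.verts = {v : V | ∃ w, G.Adj v w} ∧ M.verts.Nonempty ∧
    M.IsMatching ∧
    ∀ i j : V, M.Adj i j → ∀ i' j' : V, G.Adj i i' → G.Adj j j' → G.Adj i' j'

/-- The graph `G^{0-1}`: its edges are the edges `{i, j}` of `G` such that `a i + a j = 1`
for every basic `1`-cover `a` of `G`.  (Its vertex set is interpreted as the set of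
non-isolated vertices of `G`; here it is defined on all of `V`, and the vertices of `G`
that are isolated stay isolated, so they can be excluded explicitly when needed.) -/
def ZeroOne (G : SimpleGraph V) : SimpleGraph V where
  Adj i j := G.Adj i j ∧ ∀ a : V → ℕ, IsBasicCover G 1 a → a i + a j = 1
  symm := by
    constructor
    intro i j h
    exact ⟨h.1.symm, fun a ha => by rw [add_comm]; exact h.2 a ha⟩
  loopless := by
    constructor
    intro i h
    exact G.irrefl h.1

/-- `A ∪ B` is a vertex bipartition of the connected component `C` of `H`, and the edges of
`H` inside `C` are exactly the pairs `{x, y}` with `x ∈ A` and `y ∈ B` (so the component is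
a complete bipartite graph on `A ∪ B`). -/
def IsCompBipartition (H : SimpleGraph V) (C : H.ConnectedComponent) (A B : Set V) : Prop :=
  A ∪ B = C.supp ∧ Disjoint A B ∧
    ∀ x ∈ C.supp, ∀ y ∈ C.supp,
      (H.Adj x y ↔ (x ∈ A ∧ y ∈ B) ∨ (x ∈ B ∧ y ∈ A))

/-- The graph `G⁺` obtained from `G` by attaching a pendant vertex to each vertex of `G`:
`Sum.inl v` is the original vertex `v`, and `Sum.inr v` is the pendant attached to `v`. -/
def GPlus (G : SimpleGraph V) : SimpleGraph (V ⊕ V) where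
  Adj x y :=
    match x, y with
    | Sum.inl u, Sum.inl v => G.Adj u v
    | Sum.inl u, Sum.inr v => u = v
    | Sum.inr u, Sum.inl v => u = v
    | Sum.inr _, Sum.inr _ => False
  symm := by
    constructor
    rintro (u | u) (v | v) h
    · exact h.symm
    · exact h.symm
    · exact h.symm
    · exact h.elim
  loopless := by
    constructor
    rintro (u | u) h
    · exact G.irrefl h
    · exact h
namespace WSCDomainProof

variable (G : SimpleGraph V)

/-- The indicator of a single vertex. -/
def single (v : V) : V → ℕ := fun w => if w = v then 1 else 0

lemma single_ne_zero (v : V) : single (V := V) v ≠ 0 := by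
  intro h
  have := congrFun h v
  simp [single] at this

lemma cover_zero_single (v : V) : IsCover G 0 (single v) :=
  ⟨single_ne_zero v, fun _ _ _ => Nat.zero_le _⟩

lemma basic_not_cover_sub {k : ℕ} {a : V → ℕ} {v : V}
    (h : IsBasicCover G k a) (hv : 1 ≤ a v) :
    ¬ IsCover G k (fun w => a w - single v w) := by
  intro hcov
  apply h.2
  refine ⟨_, single v, hcov, cover_zero_single G v, funext fun w => ?_⟩
  have : single (V := V) v w ≤ a w := by
    by_cases hw : w = v
    · subst hw; simpa [single] using hv
    · simp [single, hw]
  simp only [Pi.add_apply]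
  omega

lemma broken_edge {k : ℕ} {a : V → ℕ} {v : V}
    (hcov : IsCover G k a) (hv : 1 ≤ a v)
    (h : ¬ IsCover G k (fun w => a w - single v w)) :
    (a v = 1 ∧ ∀ w, w ≠ v → a w = 0) ∨ ∃ u, G.Adj v u ∧ a v + a u ≤ k := by
  by_contra hneg
  have hdeg : ¬(a v = 1 ∧ ∀ w, w ≠ v → a w = 0) := fun hx => hneg (Or.inl hx)
  have hedge : ∀ u, G.Adj v u → ¬(a v + a u ≤ k) :=
    fun u hu hle => hneg (Or.inr ⟨u, hu, hle⟩)
  apply h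
  constructor
  · -- nonzero
    intro h0
    have hz : ∀ w, a w - single v w = 0 := fun w => congrFun h0 w
    have hav : a v ≤ 1 := by have := hz v; simp [single] at this; omega
    have key : ∀ w, w ≠ v → a w = 0 := by
      intro w hw
      have := hz w
      simp [single, hw] at this
      omega
    exact hdeg ⟨by omega, key⟩
  · intro i j hij
    have hne : i ≠ j := G.ne_of_adj hij
    by_cases hi : i = v
    · subst hi
      have := hedge j hij
      simp [single, hne.symm]
      omega
    · by_cases hj : j = v
      · subst hj
        have := hedge i hij.symm
        simp [single, hi]
        omega
      · have := hcov.2 i j hij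
        simp [single, hi, hj]
        omega

lemma basic_le {k : ℕ} {a : V → ℕ} (hk : 1 ≤ k)
    (h : IsBasicCover G k a) (v : V) : a v ≤ k := by
  by_contra hgt
  push_neg at hgt
  have hv1 : 1 ≤ a v := by omega
  apply basic_not_cover_sub G h hv1
  constructor
  · intro h0
    have := congrFun h0 v
    simp [single] at this
    omega
  · intro i j hij
    have hcov := h.1.2 i j hij
    by_cases hi : i = v
    · subst hi; simp [single, (G.ne_of_adj hij).symm]; omega
    · by_cases hj : j = v
      · subst hj; simp [single, hi]; omega
      · simp [single, hi, hj]; omega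

lemma basic_isolated {k : ℕ} {a : V → ℕ} {v : V} (hk : 1 ≤ k)
    (hedge : ∃ x y, G.Adj x y) (h : IsBasicCover G k a)
    (hiso : ∀ u, ¬ G.Adj v u) : a v = 0 := by
  by_contra hav
  have hav' : 1 ≤ a v := by omega
  apply basic_not_cover_sub G h hav'
  obtain ⟨x, y, hxy⟩ := hedge
  have hxv : x ≠ v := fun h' => hiso y (h' ▸ hxy)
  have hyv : y ≠ v := fun h' => hiso x (h' ▸ hxy.symm)
  constructor
  · intro h0
    have hx := congrFun h0 x
    have hy := congrFun h0 y
    have hcov := h.1.2 x y hxy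
    simp [single, hxv, hyv] at hx hy
    omega
  · intro i j hij
    have hiv : i ≠ v := fun h' => hiso j (h' ▸ hij)
    have hjv : j ≠ v := fun h' => hiso i (h' ▸ hij.symm)
    have := h.1.2 i j hij
    simp [single, hiv, hjv]
    omega

lemma pair_one {i j : V} {a : V → ℕ} (hij : G.Adj i j)
    (hP : ∀ i' j', G.Adj i i' → G.Adj j j' → G.Adj i' j')
    (h : IsBasicCover G 1 a) : a i + a j = 1 := by
  have hge := h.1.2 i j hij
  have hi1 : a i ≤ 1 := basic_le G le_rfl h i
  have hj1 : a j ≤ 1 := basic_le G le_rfl h j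
  have hne : i ≠ j := G.ne_of_adj hij
  by_contra hsum
  have hai : a i = 1 := by omega
  have haj : a j = 1 := by omega
  rcases broken_edge G h.1 (by omega)
      (basic_not_cover_sub G h (v := i) (by omega)) with hdeg | ⟨u, hu, hule⟩
  · exact absurd (hdeg.2 j hne.symm) (by omega)
  rcases broken_edge G h.1 (by omega)
      (basic_not_cover_sub G h (v := j) (by omega)) with hdeg | ⟨u', hu', hule'⟩
  · exact absurd (hdeg.2 i hne) (by omega)
  have hadj := hP u u' hu hu'
  have := h.1.2 u u' hadj
  omega

lemma pair_two_aux {i j : V} {a : V → ℕ} (hij : G.Adj i j)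
    (hP : ∀ i' j', G.Adj i i' → G.Adj j j' → G.Adj i' j')
    (h : IsBasicCover G 2 a) (h2 : a i = 2) (h1 : 1 ≤ a j) : False := by
  have hne : i ≠ j := G.ne_of_adj hij
  rcases broken_edge G h.1 (by omega)
      (basic_not_cover_sub G h (v := i) (by omega)) with hdeg | ⟨u, hu, hule⟩
  · omega
  rcases broken_edge G h.1 h1
      (basic_not_cover_sub G h (v := j) h1) with hdeg | ⟨u', hu', hule'⟩
  · exact absurd (hdeg.2 i hne) (by omega)
  have hadj := hP u u' hu hu'
  have := h.1.2 u u' hadj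
  omega

lemma pair_two {i j : V} {a : V → ℕ} (hij : G.Adj i j)
    (hP : ∀ i' j', G.Adj i i' → G.Adj j j' → G.Adj i' j')
    (h : IsBasicCover G 2 a) : a i + a j = 2 := by
  have hge := h.1.2 i j hij
  have hi2 : a i ≤ 2 := basic_le G (by omega) h i
  have hj2 : a j ≤ 2 := basic_le G (by omega) h j
  by_contra hsum
  by_cases hcase : a i = 2
  · exact pair_two_aux G hij hP h hcase (by omega)
  · have hP' : ∀ i' j', G.Adj j i' → G.Adj i j' → G.Adj i' j' :=
      fun i' j' h1 h2 => (hP j' i' h2 h1).symm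
    exact pair_two_aux G hij.symm hP' h (by omega) (by omega)

theorem wsc_to_domain (hw : SatisfiesWSC G) : IsGraphDomain G := by
  intro s t hst f g hf hg
  set a : V → ℕ := (∑ p, f p) + (∑ q, g q) with ha
  have haeval : ∀ v, a v = (∑ p, f p v) + (∑ q, g q v) := by
    intro v
    simp [ha, Finset.sum_apply]
  have hcov : IsCover G (s + 2 * t) a := by
    constructor
    · -- nonzero
      have : ∃ v, 1 ≤ a v := by
        rcases Nat.lt_or_ge 0 s with hs | hs
        · obtain ⟨v, hv⟩ := Function.ne_iff.mp (hf ⟨0, hs⟩).1.1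
          refine ⟨v, ?_⟩
          have h1 : f ⟨0, hs⟩ v ≤ ∑ p, f p v :=
            Finset.single_le_sum (f := fun p => f p v) (fun p _ => Nat.zero_le _)
              (Finset.mem_univ _)
          have : f ⟨0, hs⟩ v ≠ 0 := by simpa using hv
          have := haeval v
          omega
        · have ht : 0 < t := by omega
          obtain ⟨v, hv⟩ := Function.ne_iff.mp (hg ⟨0, ht⟩).1.1
          refine ⟨v, ?_⟩
          have h1 : g ⟨0, ht⟩ v ≤ ∑ q, g q v :=
            Finset.single_le_sum (f := fun q => g q v) (fun q _ => Nat.zero_le _)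
              (Finset.mem_univ _)
          have : g ⟨0, ht⟩ v ≠ 0 := by simpa using hv
          have := haeval v
          omega
      obtain ⟨v, hv⟩ := this
      intro h0
      have := congrFun h0 v
      simp at this
      omega
    · intro i j hij
      have h1 : (s : ℕ) ≤ ∑ p, (f p i + f p j) := by
        calc (s : ℕ) = ∑ _p : Fin s, 1 := by simp
        _ ≤ ∑ p, (f p i + f p j) :=
          Finset.sum_le_sum fun p _ => (hf p).1.2 i j hij
      have h2 : (2 * t : ℕ) ≤ ∑ q, (g q i + g q j) := by
        calc (2 * t : ℕ) = ∑ _q : Fin t, 2 := by simp [mul_comm]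
        _ ≤ ∑ q, (g q i + g q j) :=
          Finset.sum_le_sum fun q _ => (hg q).1.2 i j hij
      have e1 : ∑ p, (f p i + f p j) = (∑ p, f p i) + (∑ p, f p j) :=
        Finset.sum_add_distrib
      have e2 : ∑ q, (g q i + g q j) = (∑ q, g q i) + (∑ q, g q j) :=
        Finset.sum_add_distrib
      have := haeval i
      have := haeval j
      omega
  refine ⟨hcov, ?_⟩
  rintro ⟨b, c, hb, hc, habc⟩
  have hav : ∀ w, a w = b w + c w := fun w => by
    have := congrFun habc w; simpa using this
  obtain ⟨v, hv⟩ := Function.ne_iff.mp hc.1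
  have hv1 : 1 ≤ c v := by simp at hv; omega
  by_cases hiso : ∃ u, G.Adj v u
  · obtain ⟨j, hvj, hP⟩ := hw.2 v hiso
    have hsum : a v + a j = s + 2 * t := by
      have e1 : ∑ p, (f p v + f p j) = (∑ p, f p v) + (∑ p, f p j) :=
        Finset.sum_add_distrib
      have e2 : ∑ q, (g q v + g q j) = (∑ q, g q v) + (∑ q, g q j) :=
        Finset.sum_add_distrib
      have h1 : ∑ p, (f p v + f p j) = s := by
        rw [Finset.sum_congr rfl fun p _ => pair_one G hvj hP (hf p)]
        simp
      have h2 : ∑ q, (g q v + g q j) = 2 * t := by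
        rw [Finset.sum_congr rfl fun q _ => pair_two G hvj hP (hg q)]
        simp [mul_comm]
      have := haeval v
      have := haeval j
      omega
    have := hb.2 v j hvj
    have := hav v
    have := hav j
    omega
  · push_neg at hiso
    have hfv : ∀ p, f p v = 0 := fun p =>
      basic_isolated G le_rfl hw.1 (hf p) hiso
    have hgv : ∀ q, g q v = 0 := fun q =>
      basic_isolated G (by omega) hw.1 (hg q) hiso
    have : a v = 0 := by
      rw [haeval]
      rw [Finset.sum_congr rfl fun p _ => hfv p, Finset.sum_congr rfl fun q _ => hgv q]
      simp
    have := hav v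
    omega

/-! ### The reverse direction -/

def Indep (U : Finset V) : Prop := ∀ x ∈ U, ∀ y ∈ U, ¬ G.Adj x y

def MaxInd (U : Finset V) : Prop :=
  Indep G U ∧ ∀ v, v ∉ U → ∃ u ∈ U, G.Adj v u

lemma exists_maxind (A : Finset V) (hA : Indep G A) :
    ∃ U : Finset V, A ⊆ U ∧ MaxInd G U := by
  classical
  set 𝒮 : Finset (Finset V) :=
    Finset.univ.filter (fun B => A ⊆ B ∧ Indep G B) with h𝒮
  have hA𝒮 : A ∈ 𝒮 := by simp [h𝒮, hA]
  obtain ⟨U, hU, hmax⟩ := Finset.exists_max_image 𝒮 Finset.card ⟨A, hA𝒮⟩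
  simp only [h𝒮, Finset.mem_filter, Finset.mem_univ, true_and] at hU
  refine ⟨U, hU.1, hU.2, ?_⟩
  intro v hv
  by_contra hno
  push_neg at hno
  have hins : Indep G (insert v U) := by
    intro x hx y hy
    have hx' := Finset.mem_insert.mp hx
    have hy' := Finset.mem_insert.mp hy
    rcases hx' with hx1 | hx2
    · rcases hy' with hy1 | hy2
      · subst hx1; subst hy1; exact G.irrefl
      · subst hx1; exact hno y hy2
    · rcases hy' with hy1 | hy2
      · subst hy1; exact fun hadj => hno x hx2 hadj.symm
      · exact hU.2 x hx2 y hy2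
  have hmem : insert v U ∈ 𝒮 := by
    simp only [h𝒮, Finset.mem_filter, Finset.mem_univ, true_and]
    exact ⟨hU.1.trans (Finset.subset_insert _ _), hins⟩
  have := hmax _ hmem
  rw [Finset.card_insert_of_notMem hv] at this
  omega

lemma domain_edge [Nonempty V] (h : IsGraphDomain G) : ∃ i j, G.Adj i j := by
  by_contra hne
  push_neg at hne
  obtain ⟨v₀⟩ := ‹Nonempty V›
  have hcov1 : IsCover G 1 (single v₀) :=
    ⟨single_ne_zero v₀, fun i j hij => absurd hij (hne i j)⟩
  have hcov2 : IsCover G 2 (single v₀) :=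
    ⟨single_ne_zero v₀, fun i j hij => absurd hij (hne i j)⟩
  have hbasic : IsBasicCover G 1 (single v₀) := by
    refine ⟨hcov1, ?_⟩
    rintro ⟨b, c, hb, hc, hsum⟩
    obtain ⟨vb, hvb⟩ := Function.ne_iff.mp hb.1
    obtain ⟨vc, hvc⟩ := Function.ne_iff.mp hc.1
    have heq : ∀ w, single v₀ w = b w + c w := fun w => by
      have := congrFun hsum w; simpa using this
    simp only [Pi.zero_apply] at hvb hvc
    have h1 := heq vb
    have h2 := heq vc
    have h3 := heq v₀
    have hb1 : vb = v₀ := by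
      by_contra hx; simp [single, hx] at h1; omega
    have hc1 : vc = v₀ := by
      by_contra hx; simp [single, hx] at h2; omega
    subst hb1; subst hc1
    simp [single] at h3
    omega
  have hdom := h 2 0 (by omega) (fun _ => single v₀) Fin.elim0
    (fun _ => hbasic) (fun q => q.elim0)
  apply hdom.2
  refine ⟨single v₀, single v₀, hcov2, cover_zero_single G v₀, ?_⟩
  funext w
  simp [Finset.sum_apply, Fin.sum_univ_two, Finset.univ_eq_empty]
  omega

lemma maxind_basic (hedge : ∃ x y, G.Adj x y) {U : Finset V} (hU : MaxInd G U) :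
    IsBasicCover G 1 (fun v => if v ∈ U then 0 else 1) := by
  classical
  have hind : ∀ {x y : V}, G.Adj x y → x ∉ U ∨ y ∉ U := by
    intro x y hxy
    by_contra hcon
    push_neg at hcon
    exact hU.1 x hcon.1 y hcon.2 hxy
  have hcov : IsCover G 1 (fun v => if v ∈ U then 0 else 1) := by
    constructor
    · obtain ⟨x, y, hxy⟩ := hedge
      rcases hind hxy with hx | hy
      · exact Function.ne_iff.mpr ⟨x, by simp [hx]⟩
      · exact Function.ne_iff.mpr ⟨y, by simp [hy]⟩
    · intro i j hij
      rcases hind hij with hi | hj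
      · simp [hi]
      · simp [hj]
  refine ⟨hcov, ?_⟩
  rintro ⟨b, c, hb, hc, hsum⟩
  obtain ⟨v, hv⟩ := Function.ne_iff.mp hc.1
  simp only [Pi.zero_apply] at hv
  have heq : ∀ w, (if w ∈ U then 0 else 1) = b w + c w := fun w => by
    have := congrFun hsum w; simpa using this
  have hvU : v ∉ U := by
    intro hmem
    have := heq v
    simp [hmem] at this
    omega
  have hbv : b v = 0 := by have := heq v; simp [hvU] at this; omega
  obtain ⟨u, huU, hadj⟩ := hU.2 v hvU
  have hbu : b u = 0 := by have := heq u; simp [huU] at this; omega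
  have := hb.2 v u hadj
  omega

theorem domain_to_wsc [Nonempty V] (h : IsGraphDomain G) : SatisfiesWSC G := by
  classical
  have hedge := domain_edge G h
  refine ⟨hedge, ?_⟩
  intro i ⟨i₀, hi₀⟩
  set ℱ : Finset (Finset V) := Finset.univ.filter (MaxInd G) with hℱ
  have hmemℱ : ∀ U : Finset V, U ∈ ℱ ↔ MaxInd G U := by
    intro U; simp [hℱ]
  obtain ⟨U₀, _, hU₀⟩ := exists_maxind G ∅ (by intro x hx; simp at hx)
  have hne : ℱ.Nonempty := ⟨U₀, (hmemℱ U₀).mpr hU₀⟩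
  set s := ℱ.card with hs
  have hs1 : 1 ≤ s := Finset.card_pos.mpr hne
  set e := ℱ.equivFin with he
  set f : Fin s → V → ℕ := fun p v => if v ∈ (e.symm p : Finset V) then 0 else 1 with hf
  have hfbasic : ∀ p, IsBasicCover G 1 (f p) := by
    intro p
    exact maxind_basic G hedge ((hmemℱ _).mp (e.symm p).2)
  have hdom := h s 0 (by omega) f Fin.elim0 hfbasic (fun q => q.elim0)
  set a : V → ℕ := ∑ p, f p with ha
  have hB : IsBasicCover G s a := by
    have h1 : ((∑ p, f p) + (∑ q : Fin 0, Fin.elim0 q)) = a := by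
      simp [ha, Finset.univ_eq_empty]
    have h2 : s + 2 * 0 = s := by omega
    rwa [h1, h2] at hdom
  have hacount : ∀ v, a v = (ℱ.filter (fun U => v ∉ U)).card := by
    intro v
    have h1 : a v = ∑ p, f p v := by simp [ha, Finset.sum_apply]
    have h2 : ∑ p, f p v = ∑ x : {x // x ∈ ℱ}, (if v ∈ (x : Finset V) then (0:ℕ) else 1) :=
      Fintype.sum_equiv e.symm _ _ (fun p => rfl)
    have h3 : ∑ x : {x // x ∈ ℱ}, (if v ∈ (x : Finset V) then (0:ℕ) else 1)
        = ∑ U ∈ ℱ, (if v ∈ U then (0:ℕ) else 1) :=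
      Finset.sum_coe_sort ℱ (fun U => if v ∈ U then (0:ℕ) else 1)
    have h4 : ∑ U ∈ ℱ, (if v ∈ U then (0:ℕ) else 1)
        = ∑ U ∈ ℱ, (if v ∉ U then (1:ℕ) else 0) := by
      apply Finset.sum_congr rfl
      intro U _
      by_cases hvU : v ∈ U <;> simp [hvU]
    rw [h1, h2, h3, h4, Finset.card_filter]
  -- there is a maximal independent set avoiding i
  have hai : 1 ≤ a i := by
    obtain ⟨U, hsub, hU⟩ := exists_maxind G {i₀} (by
      intro x hx y hy
      simp only [Finset.mem_singleton] at hx hy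
      subst hx; subst hy
      exact G.irrefl)
    have hiU : i ∉ U := by
      intro hmem
      exact hU.1 i hmem i₀ (hsub (Finset.mem_singleton_self i₀)) hi₀
    have : U ∈ ℱ.filter (fun U => i ∉ U) :=
      Finset.mem_filter.mpr ⟨(hmemℱ U).mpr hU, hiU⟩
    rw [hacount]
    exact Finset.card_pos.mpr ⟨U, this⟩
  -- the key dichotomy coming from basicness
  have hkey : ∃ j, G.Adj i j ∧ ∀ U ∈ ℱ, i ∈ U ∨ j ∈ U := by
    rcases broken_edge G hB.1 hai (basic_not_cover_sub G hB hai) with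
      ⟨_, hzero⟩ | ⟨u, hiu, hsum⟩
    · refine ⟨i₀, hi₀, ?_⟩
      intro U hU
      right
      by_contra hi₀U
      have hi₀i : i₀ ≠ i := fun hx => (G.irrefl : ¬ G.Adj i i) (hx ▸ hi₀)
      have h0 : a i₀ = 0 := hzero i₀ hi₀i
      rw [hacount] at h0
      have : U ∈ ℱ.filter (fun U => i₀ ∉ U) := Finset.mem_filter.mpr ⟨hU, hi₀U⟩
      have := Finset.card_pos.mpr ⟨U, this⟩
      omega
    · refine ⟨u, hiu, ?_⟩
      set P := ℱ.filter (fun U => i ∉ U) with hP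
      set Q := ℱ.filter (fun U => u ∉ U) with hQ
      have hunion : P ∪ Q = ℱ := by
        apply Finset.Subset.antisymm
        · exact Finset.union_subset (Finset.filter_subset _ _) (Finset.filter_subset _ _)
        · intro U hU
          have : i ∉ U ∨ u ∉ U := by
            by_contra hcon
            push_neg at hcon
            exact ((hmemℱ U).mp hU).1 i hcon.1 u hcon.2 hiu
          rcases this with h' | h'
          · exact Finset.mem_union_left _ (Finset.mem_filter.mpr ⟨hU, h'⟩)
          · exact Finset.mem_union_right _ (Finset.mem_filter.mpr ⟨hU, h'⟩)
      have hcards : (P ∪ Q).card + (P ∩ Q).card = P.card + Q.card :=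
        Finset.card_union_add_card_inter P Q
      have hPc : P.card = a i := (hacount i).symm
      have hQc : Q.card = a u := (hacount u).symm
      have hinter : (P ∩ Q).card = 0 := by
        rw [hunion] at hcards
        omega
      intro U hU
      by_contra hcon
      push_neg at hcon
      have : U ∈ P ∩ Q := Finset.mem_inter.mpr
        ⟨Finset.mem_filter.mpr ⟨hU, hcon.1⟩, Finset.mem_filter.mpr ⟨hU, hcon.2⟩⟩
      have := Finset.card_pos.mpr ⟨U, this⟩
      omega
  obtain ⟨j, hij, hQ⟩ := hkey
  refine ⟨j, hij, ?_⟩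
  intro i' j' hii' hjj'
  by_contra hnadj
  have hindep : Indep G {i', j'} := by
    intro x hx y hy
    simp only [Finset.mem_insert, Finset.mem_singleton] at hx hy
    rcases hx with rfl | rfl <;> rcases hy with rfl | rfl
    · exact G.irrefl
    · exact hnadj
    · exact fun hadj => hnadj hadj.symm
    · exact G.irrefl
  obtain ⟨U, hsub, hU⟩ := exists_maxind G {i', j'} hindep
  have hi'U : i' ∈ U := hsub (by simp)
  have hj'U : j' ∈ U := hsub (by simp)
  have hiU : i ∉ U := fun hmem => hU.1 i hmem i' hi'U hii'
  have hjU : j ∉ U := fun hmem => hU.1 j hmem j' hj'U hjj'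
  rcases hQ U ((hmemℱ U).mpr hU) with h' | h'
  · exact hiU h'
  · exact hjU h'

end WSCDomainProof


/-- A finite simple graph `G` satisfies WSC if and only if `G` is a domain. -/
theorem wsc_iff_domain [Nonempty V] (G : SimpleGraph V) :
    SatisfiesWSC G ↔ IsGraphDomain G := by
  exact ⟨WSCDomainProof.wsc_to_domain G, WSCDomainProof.domain_to_wsc G⟩
end

section
/- A finite simple graph G satisfies MSC if and only if G is an unmixed domain (i.e., G is unmixed and G is a domain). -/
variable {V : Type*} [Fintype V] [DecidableEq V]

set_option linter.unusedSectionVars false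

namespace MSCaux
open Finset
open scoped Classical

variable (G : SimpleGraph V)

def chi (S : Finset V) : V → ℕ := fun v => if v ∈ S then 1 else 0

def Covers (S : Finset V) : Prop := ∀ ⦃i j : V⦄, G.Adj i j → i ∈ S ∨ j ∈ S

def MinCover (S : Finset V) : Prop :=
  Covers G S ∧ S.Nonempty ∧ ∀ v ∈ S, ∃ u, G.Adj v u ∧ u ∉ S

def Indep (S : Finset V) : Prop := ∀ ⦃x : V⦄, x ∈ S → ∀ ⦃y : V⦄, y ∈ S → ¬G.Adj x y

variable {G}

lemma chi_apply_mem {S : Finset V} {v : V} (h : v ∈ S) : chi S v = 1 := if_pos h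
lemma chi_apply_not_mem {S : Finset V} {v : V} (h : v ∉ S) : chi S v = 0 := if_neg h
lemma chi_le_one (S : Finset V) (v : V) : chi S v ≤ 1 := by unfold chi; split <;> omega
lemma chi_sum (S : Finset V) : ∑ v, chi S v = S.card := by
  simp only [chi]
  rw [Finset.sum_ite_mem, Finset.univ_inter, Finset.sum_const, smul_eq_mul, mul_one]

lemma ne_zero_iff {a : V → ℕ} : a ≠ 0 ↔ ∃ v, a v ≠ 0 := Function.ne_iff

lemma cover_chi {S : Finset V} (hS : Covers G S) (hne : S.Nonempty) : IsCover G 1 (chi S) := by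
  constructor
  · rw [ne_zero_iff]
    obtain ⟨v, hv⟩ := hne
    exact ⟨v, by simp [chi_apply_mem hv]⟩
  · intro i j hij
    rcases hS hij with h | h
    · have := chi_apply_mem (S := S) h; omega
    · have := chi_apply_mem (S := S) h; omega

lemma minCover_basic {S : Finset V} (hS : MinCover G S) : IsBasicCover G 1 (chi S) := by
  refine ⟨cover_chi hS.1 hS.2.1, ?_⟩
  rintro ⟨b, c, hb, hc, habc⟩
  obtain ⟨v, hv⟩ := ne_zero_iff.1 hc.1
  have hbv : ∀ w, b w ≤ chi S w := fun w => by
    have := congrFun habc w; simp only [Pi.add_apply] at this; omega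
  have hvS : v ∈ S := by
    by_contra h
    have := congrFun habc v; simp only [Pi.add_apply] at this
    rw [chi_apply_not_mem h] at this; omega
  have hbv0 : b v = 0 := by
    have := congrFun habc v; simp only [Pi.add_apply] at this
    have := chi_le_one S v; omega
  obtain ⟨u, huv, huS⟩ := hS.2.2 v hvS
  have := hb.2 v u huv
  have h1 : b u ≤ chi S u := hbv u
  rw [chi_apply_not_mem huS] at h1
  omega

lemma basic_one_eq_chi {a : V → ℕ} (hE : ∃ p q : V, G.Adj p q)
    (ha : IsBasicCover G 1 a) : ∃ S : Finset V, MinCover G S ∧ a = chi S := by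
  classical
  obtain ⟨p, q, hpq⟩ := hE
  -- some vertex on each edge has positive value; in particular a p + a q ≥ 1
  have hedge := ha.1.2
  -- values ≤ 1
  have hle : ∀ v, a v ≤ 1 := by
    intro v
    by_contra h
    push_neg at h
    apply ha.2
    refine ⟨fun w => a w - (if w = v then 1 else 0), fun w => if w = v then 1 else 0, ⟨?_, ?_⟩, ⟨?_, ?_⟩, ?_⟩
    · rw [ne_zero_iff]
      refine ⟨v, ?_⟩
      try dsimp only
      rw [if_pos rfl]
      omega
    · intro i j hij
      have := hedge i j hij
      have hne : i ≠ j := hij.ne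
      try dsimp only
      by_cases hi : i = v
      · subst hi
        rw [if_pos rfl, if_neg (fun hh : j = i => hne hh.symm)]
        omega
      · rw [if_neg hi]
        by_cases hj : j = v
        · subst hj
          rw [if_pos rfl]
          omega
        · rw [if_neg hj]
          omega
    · rw [ne_zero_iff]
      refine ⟨v, ?_⟩
      try dsimp only
      rw [if_pos rfl]
      omega
    · intro i j _; exact Nat.zero_le _
    · funext w
      show a w = (a w - (if w = v then 1 else 0)) + (if w = v then 1 else 0)
      by_cases hw : w = v
      · rw [if_pos hw]; subst hw; omega
      · rw [if_neg hw]; omega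
  set S : Finset V := Finset.univ.filter (fun v => a v ≠ 0) with hSdef
  have haS : a = chi S := by
    funext v
    by_cases h : a v = 0
    · rw [h, chi_apply_not_mem]; simp [hSdef, h]
    · rw [chi_apply_mem]; · have := hle v; omega
      · simp [hSdef, h]
  refine ⟨S, ⟨?_, ?_, ?_⟩, haS⟩
  · intro i j hij
    have := hedge i j hij
    by_contra hcon
    push_neg at hcon
    simp only [hSdef, Finset.mem_filter, Finset.mem_univ, true_and, not_not] at hcon
    omega
  · have h1 := hedge p q hpq
    rcases Nat.lt_or_ge (a p) 1 with h | h
    · exact ⟨q, Finset.mem_filter.2 ⟨Finset.mem_univ _, by show a q ≠ 0; omega⟩⟩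
    · exact ⟨p, Finset.mem_filter.2 ⟨Finset.mem_univ _, by show a p ≠ 0; omega⟩⟩
  · intro v hv
    by_contra hcon
    push_neg at hcon
    apply ha.2
    have hav : a v = 1 := by
      simp only [hSdef, Finset.mem_filter, Finset.mem_univ, true_and] at hv
      have := hle v; omega
    refine ⟨fun w => a w - (if w = v then 1 else 0), fun w => if w = v then 1 else 0, ⟨?_, ?_⟩, ⟨?_, ?_⟩, ?_⟩
    · rw [ne_zero_iff]
      -- need another vertex with a ≥ 1 : the edge p q has a covered endpoint ≠ v?
      -- v's neighbours are all in S; pick neighbour u of v? v may be isolated? v ∈ S & hcon: all u adj v are in S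
      -- a p + a q ≥ 1 gives a nonzero value off v.
      by_cases hiso : ∃ u, G.Adj v u
      · obtain ⟨u, hu⟩ := hiso
        have huS := hcon u hu
        have : a u = 1 := by
          simp only [hSdef, Finset.mem_filter, Finset.mem_univ, true_and] at huS
          have := hle u; omega
        refine ⟨u, ?_⟩
        try dsimp only
        rw [if_neg (by exact fun hh => hu.ne' hh)]
        omega
      · push_neg at hiso
        have hp : p ≠ v := fun h => hiso q (h ▸ hpq)
        have hq : q ≠ v := fun h => hiso p (h ▸ hpq.symm)
        have := hedge p q hpq
        rcases Nat.lt_or_ge (a p) 1 with h | h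
        · refine ⟨q, ?_⟩
          try dsimp only
          rw [if_neg hq]
          omega
        · refine ⟨p, ?_⟩
          try dsimp only
          rw [if_neg hp]
          omega
    · intro i j hij
      have := hedge i j hij
      have hne : i ≠ j := hij.ne
      try dsimp only
      by_cases hi : i = v
      · have hjS := hcon j (hi ▸ hij)
        have haj : a j = 1 := by
          simp only [hSdef, Finset.mem_filter, Finset.mem_univ, true_and] at hjS
          have := hle j; omega
        rw [if_pos hi, if_neg (fun hh => hne (hi.trans hh.symm))]
        omega
      · by_cases hj : j = v
        · have hiS := hcon i (hj ▸ hij.symm)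
          have hai : a i = 1 := by
            simp only [hSdef, Finset.mem_filter, Finset.mem_univ, true_and] at hiS
            have := hle i; omega
          rw [if_neg hi, if_pos hj]
          omega
        · rw [if_neg hi, if_neg hj]; omega
    · rw [ne_zero_iff]; exact ⟨v, by simp⟩
    · intro i j _; exact Nat.zero_le _
    · funext w
      show a w = (a w - (if w = v then 1 else 0)) + (if w = v then 1 else 0)
      by_cases hw : w = v
      · rw [if_pos hw]; subst hw
        omega
      · rw [if_neg hw]; omega

lemma exists_maxIndep {S : Finset V} (hS : Indep G S) :
    ∃ I : Finset V, S ⊆ I ∧ Indep G I ∧ ∀ v, v ∉ I → ∃ u ∈ I, G.Adj v u := by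
  classical
  obtain ⟨I, hI, hmax⟩ := Finset.exists_max_image
    ((Finset.univ.powerset).filter (fun J => Indep G J ∧ S ⊆ J)) Finset.card
    ⟨S, by simp [Finset.mem_filter, hS]⟩
  simp only [Finset.mem_filter, Finset.mem_powerset] at hI
  refine ⟨I, hI.2.2, hI.2.1, ?_⟩
  intro v hv
  by_contra hcon
  push_neg at hcon
  have hind : Indep G (insert v I) := by
    intro x hx y hy hxy
    rcases Finset.mem_insert.1 hx with hx1 | hx1 <;> rcases Finset.mem_insert.1 hy with hy1 | hy1
    · rw [hx1, hy1] at hxy; exact G.loopless.irrefl v hxy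
    · rw [hx1] at hxy; exact hcon y hy1 hxy
    · rw [hy1] at hxy; exact hcon x hx1 hxy.symm
    · exact hI.2.1 hx1 hy1 hxy
  have := hmax (insert v I) (by
    simp only [Finset.mem_filter, Finset.mem_powerset]
    exact ⟨Finset.subset_univ _, hind, hI.2.2.trans (Finset.subset_insert _ _)⟩)
  rw [Finset.card_insert_of_notMem hv] at this
  omega

lemma compl_minCover (hE : ∃ p q : V, G.Adj p q) {I : Finset V} (hI : Indep G I)
    (hmax : ∀ v, v ∉ I → ∃ u ∈ I, G.Adj v u) : MinCover G (Finset.univ \ I) := by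
  refine ⟨?_, ?_, ?_⟩
  · intro i j hij
    by_contra h
    push_neg at h
    simp only [Finset.mem_sdiff, Finset.mem_univ, true_and, not_not] at h
    exact hI h.1 h.2 hij
  · obtain ⟨p, q, hpq⟩ := hE
    by_cases hp : p ∈ I
    · refine ⟨q, Finset.mem_sdiff.2 ⟨Finset.mem_univ _, fun h => hI hp h hpq⟩⟩
    · exact ⟨p, by simp [hp]⟩
  · intro v hv
    simp only [Finset.mem_sdiff, Finset.mem_univ, true_and] at hv
    obtain ⟨u, hu, huv⟩ := hmax v hv
    exact ⟨u, huv, by simp [hu]⟩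

lemma exists_minCover_avoid (hE : ∃ p q : V, G.Adj p q) {x y : V} (h : ¬G.Adj x y) :
    ∃ S : Finset V, MinCover G S ∧ x ∉ S ∧ y ∉ S := by
  have hind : Indep G ({x, y} : Finset V) := by
    intro a ha b hb hab
    simp only [Finset.mem_insert, Finset.mem_singleton] at ha hb
    rcases ha with rfl | rfl <;> rcases hb with rfl | rfl
    · exact G.loopless.irrefl _ hab
    · exact h hab
    · exact h hab.symm
    · exact G.loopless.irrefl _ hab
  obtain ⟨I, hsub, hI, hmax⟩ := exists_maxIndep hind
  refine ⟨Finset.univ \ I, compl_minCover hE hI hmax, ?_, ?_⟩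
  · simp [hsub (by simp : x ∈ ({x,y} : Finset V))]
  · simp [hsub (by simp : y ∈ ({x,y} : Finset V))]

lemma exists_minCover_subset (hE : ∃ p q : V, G.Adj p q) {F : Finset V} (hF : Covers G F) :
    ∃ S ⊆ F, MinCover G S := by
  classical
  obtain ⟨S, hSmem, hmin⟩ := Finset.exists_min_image
    ((Finset.univ.powerset).filter (fun J => Covers G J ∧ J ⊆ F)) Finset.card
    ⟨F, by simp [Finset.mem_filter, hF]⟩
  simp only [Finset.mem_filter, Finset.mem_powerset] at hSmem
  obtain ⟨p, q, hpq⟩ := hE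
  refine ⟨S, hSmem.2.2, hSmem.2.1, ?_, ?_⟩
  · rcases hSmem.2.1 hpq with h | h
    · exact ⟨p, h⟩
    · exact ⟨q, h⟩
  · intro v hv
    by_contra hcon
    push_neg at hcon
    have hcov : Covers G (S.erase v) := by
      intro i j hij
      rcases hSmem.2.1 hij with h | h
      · by_cases hiv : i = v
        · subst hiv
          exact Or.inr (Finset.mem_erase.2 ⟨hij.ne', hcon j hij⟩)
        · exact Or.inl (Finset.mem_erase.2 ⟨hiv, h⟩)
      · by_cases hjv : j = v
        · subst hjv
          exact Or.inl (Finset.mem_erase.2 ⟨hij.ne, hcon i hij.symm⟩)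
        · exact Or.inr (Finset.mem_erase.2 ⟨hjv, h⟩)
    have := hmin (S.erase v) (by
      simp only [Finset.mem_filter, Finset.mem_powerset]
      exact ⟨Finset.subset_univ _, hcov, (Finset.erase_subset _ _).trans hSmem.2.2⟩)
    have := Finset.card_erase_of_mem hv
    have hpos : 0 < S.card := Finset.card_pos.2 ⟨v, hv⟩
    omega

end MSCaux

namespace MSCaux
open Finset
open scoped Classical

variable {G : SimpleGraph V}

lemma H_split {i j : V} (h : (ZeroOne G).Adj i j) {S : Finset V} (hS : MinCover G S) :
    (i ∈ S ↔ j ∉ S) := by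
  have hsum : chi S i + chi S j = 1 := h.2 (chi S) (minCover_basic hS)
  by_cases hi : i ∈ S <;> by_cases hj : j ∈ S
  · exfalso; rw [chi_apply_mem hi, chi_apply_mem hj] at hsum; omega
  · exact iff_of_true hi hj
  · exact iff_of_false hi (not_not_intro hj)
  · exfalso; rw [chi_apply_not_mem hi, chi_apply_not_mem hj] at hsum; omega

lemma H_adj_of (hE : ∃ p q : V, G.Adj p q) {i j : V} (hadj : G.Adj i j)
    (h : ∀ S : Finset V, MinCover G S → (i ∈ S ↔ j ∉ S)) : (ZeroOne G).Adj i j := by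
  refine ⟨hadj, ?_⟩
  intro a ha
  obtain ⟨S, hS, rfl⟩ := basic_one_eq_chi hE ha
  have hiff := h S hS
  by_cases hi : i ∈ S
  · rw [chi_apply_mem hi, chi_apply_not_mem (hiff.1 hi)]
  · have hj : j ∈ S := by
      by_contra hj
      exact hi (hiff.2 hj)
    rw [chi_apply_not_mem hi, chi_apply_mem hj]

lemma square (hE : ∃ p q : V, G.Adj p q) {i j i' j' : V} (h : (ZeroOne G).Adj i j)
    (h1 : G.Adj i i') (h2 : G.Adj j j') : G.Adj i' j' := by
  by_contra hcon
  obtain ⟨S, hS, hi', hj'⟩ := exists_minCover_avoid hE hcon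
  have hiS : i ∈ S := (hS.1 h1).resolve_right hi'
  have hjS : j ∈ S := (hS.1 h2).resolve_right hj'
  exact (H_split h hS).1 hiS hjS

lemma exists_H_partner (hdom : IsGraphDomain G) (hE : ∃ p q : V, G.Adj p q) {i x : V}
    (hix : G.Adj i x) : ∃ j, (ZeroOne G).Adj i j := by
  by_contra hcon
  push_neg at hcon
  classical
  set N : Finset V := Finset.univ.filter (fun j => G.Adj i j) with hN
  have hxN : x ∈ N := Finset.mem_filter.2 ⟨Finset.mem_univ _, hix⟩
  have hmemN : ∀ {j}, j ∈ N → G.Adj i j := fun hj => (Finset.mem_filter.1 hj).2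
  have hSj : ∀ j ∈ N, ∃ S : Finset V, MinCover G S ∧ i ∈ S ∧ j ∈ S := by
    intro j hj
    have hadj : G.Adj i j := hmemN hj
    have hnz : ¬ (G.Adj i j ∧ ∀ a : V → ℕ, IsBasicCover G 1 a → a i + a j = 1) := hcon j
    push_neg at hnz
    obtain ⟨a, ha, hne⟩ := hnz hadj
    obtain ⟨S, hS, rfl⟩ := basic_one_eq_chi hE ha
    rcases hS.1 hadj with hiS | hjS
    · refine ⟨S, hS, hiS, ?_⟩
      by_contra hjS
      rw [chi_apply_mem hiS, chi_apply_not_mem hjS] at hne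
      exact hne rfl
    · refine ⟨S, hS, ?_, hjS⟩
      by_contra hiS
      rw [chi_apply_not_mem hiS, chi_apply_mem hjS] at hne
      exact hne rfl
  choose Sf hSf1 hSf2 hSf3 using hSj
  set n := N.card with hn
  have hnpos : 0 < n := Finset.card_pos.2 ⟨x, hxN⟩
  let e : Fin n ≃ {y // y ∈ N} := N.equivFin.symm
  let T : Fin n → Finset V := fun p => Sf (e p).1 (e p).2
  let f : Fin n → V → ℕ := fun p => chi (T p)
  have hTmin : ∀ p, MinCover G (T p) := fun p => hSf1 _ _
  have hTi : ∀ p, i ∈ T p := fun p => hSf2 _ _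
  have hTq : ∀ p, (e p).1 ∈ T p := fun p => hSf3 _ _
  set u : V → ℕ := (∑ p, f p) + (∑ _q : Fin 0, (fun _ => (0 : ℕ))) with hu
  have husum : ∀ v, u v = ∑ p, f p v := by
    intro v
    simp only [hu, Pi.add_apply, Finset.sum_apply]
    simp
  have hbasic : IsBasicCover G (n + 2 * 0) u :=
    hdom n 0 (by omega) f (fun _ => (0 : V → ℕ)) (fun p => minCover_basic (hTmin p)) (fun q => q.elim0)
  have hedge : ∀ ⦃p q : V⦄, G.Adj p q → n ≤ u p + u q := by
    intro p q hpq
    rw [husum, husum, ← Finset.sum_add_distrib]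
    calc (n : ℕ) = ∑ _r : Fin n, 1 := by simp
    _ ≤ ∑ r, (f r p + f r q) := by
        apply Finset.sum_le_sum
        intro r _
        rcases (hTmin r).1 hpq with h | h
        · have := chi_apply_mem (S := T r) h; simp only [f]; omega
        · have := chi_apply_mem (S := T r) h; simp only [f]; omega
  have hedgei : ∀ ⦃q : V⦄, G.Adj i q → n + 1 ≤ u i + u q := by
    intro q hq
    have hqN : q ∈ N := Finset.mem_filter.2 ⟨Finset.mem_univ _, hq⟩
    rw [husum, husum, ← Finset.sum_add_distrib]
    have hn1 : ∑ _r : Fin n, (1:ℕ) = n := by simp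
    have hlt : ∑ _r : Fin n, 1 < ∑ r, (f r i + f r q) := by
      apply Finset.sum_lt_sum
      · intro r _
        rcases (hTmin r).1 hq with h | h
        · have := chi_apply_mem (S := T r) h; simp only [f]; omega
        · have := chi_apply_mem (S := T r) h; simp only [f]; omega
      · refine ⟨e.symm ⟨q, hqN⟩, Finset.mem_univ _, ?_⟩
        have h1 : i ∈ T (e.symm ⟨q, hqN⟩) := hTi _
        have h2 : (e (e.symm ⟨q, hqN⟩)).1 ∈ T (e.symm ⟨q, hqN⟩) := hTq _
        rw [e.apply_symm_apply] at h2
        have hc1 : chi (T (e.symm ⟨q, hqN⟩)) i = 1 := chi_apply_mem h1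
        have hc2 : chi (T (e.symm ⟨q, hqN⟩)) q = 1 := chi_apply_mem h2
        simp only [f]
        omega
    rw [hn1] at hlt
    omega
  apply hbasic.2
  have hfi : ∀ p, f p i = 1 := fun p => chi_apply_mem (hTi p)
  have hux1 : 1 ≤ u x := by
    rw [husum]
    have h2 : (e (e.symm ⟨x, hxN⟩)).1 ∈ T (e.symm ⟨x, hxN⟩) := hTq _
    rw [e.apply_symm_apply] at h2
    have hfx : f (e.symm ⟨x, hxN⟩) x = 1 := chi_apply_mem h2
    calc (1:ℕ) = f (e.symm ⟨x, hxN⟩) x := hfx.symm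
    _ ≤ ∑ p, f p x := Finset.single_le_sum (f := fun p => f p x) (fun p _ => Nat.zero_le _) (Finset.mem_univ _)
  have hui1 : 1 ≤ u i := by
    rw [husum]
    calc (1:ℕ) = f (e.symm ⟨x, hxN⟩) i := (hfi _).symm
    _ ≤ ∑ p, f p i := Finset.single_le_sum (f := fun p => f p i) (fun p _ => Nat.zero_le _) (Finset.mem_univ _)
  refine ⟨fun v => u v - (if v = i then 1 else 0), fun v => if v = i then 1 else 0, ⟨?_, ?_⟩, ⟨?_, ?_⟩, ?_⟩
  · rw [ne_zero_iff]
    refine ⟨x, ?_⟩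
    try dsimp only
    rw [if_neg hix.ne']
    omega
  · intro p q hpq
    have hs := hedge hpq
    try dsimp only
    by_cases hp : p = i
    · subst hp
      rw [if_pos rfl, if_neg (fun hh : q = p => hpq.ne hh.symm)]
      have := hedgei hpq
      omega
    · rw [if_neg hp]
      by_cases hq : q = i
      · subst hq
        rw [if_pos rfl]
        have := hedgei hpq.symm
        omega
      · rw [if_neg hq]
        omega
  · rw [ne_zero_iff]
    refine ⟨i, ?_⟩
    try dsimp only
    rw [if_pos rfl]
    omega
  · intro p q _
    exact Nat.zero_le _
  · funext v
    show u v = (u v - (if v = i then 1 else 0)) + (if v = i then 1 else 0)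
    by_cases hv : v = i
    · rw [if_pos hv]
      subst hv
      omega
    · rw [if_neg hv]
      omega

end MSCaux

namespace MSCaux
open Finset
open scoped Classical

variable {G : SimpleGraph V}

/-- chaining three H-edges gives an H-edge -/
lemma H_chain (hE : ∃ p q : V, G.Adj p q) {x a b c : V}
    (h1 : (ZeroOne G).Adj x a) (h2 : (ZeroOne G).Adj a b) (h3 : (ZeroOne G).Adj b c) :
    (ZeroOne G).Adj x c := by
  have hadj : G.Adj x c := square hE h2 h1.1.symm h3.1
  refine H_adj_of hE hadj ?_
  intro S hS
  have i1 := H_split h1 hS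
  have i2 := H_split h2 hS
  have i3 := H_split h3 hS
  tauto

/-- an odd-length walk in the H-graph joins H-adjacent vertices -/
lemma odd_walk_adj (hE : ∃ p q : V, G.Adj p q) :
    ∀ {x y : V} (w : (ZeroOne G).Walk x y), Odd w.length → (ZeroOne G).Adj x y := by
  intro x y w
  match w with
  | SimpleGraph.Walk.nil =>
      intro h
      rw [SimpleGraph.Walk.length_nil] at h
      norm_num [Nat.odd_iff] at h
  | SimpleGraph.Walk.cons h1 SimpleGraph.Walk.nil => intro _; exact h1
  | SimpleGraph.Walk.cons h1 (SimpleGraph.Walk.cons h2 SimpleGraph.Walk.nil) =>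
      intro hodd
      exfalso
      rw [SimpleGraph.Walk.length_cons, SimpleGraph.Walk.length_cons,
        SimpleGraph.Walk.length_nil] at hodd
      norm_num [Nat.odd_iff] at hodd
  | SimpleGraph.Walk.cons h1 (SimpleGraph.Walk.cons h2 (SimpleGraph.Walk.cons h3 w3)) =>
      intro hodd
      have hxc := H_chain hE h1 h2 h3
      have : Odd ((SimpleGraph.Walk.cons hxc w3).length) := by
        rw [Nat.odd_iff] at hodd ⊢
        simp only [SimpleGraph.Walk.length_cons] at hodd ⊢
        omega
      exact odd_walk_adj hE (SimpleGraph.Walk.cons hxc w3) this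
  termination_by x y w => w.length
  decreasing_by simp only [SimpleGraph.Walk.length_cons]; omega

lemma not_even_and_odd_walk (hE : ∃ p q : V, G.Adj p q) {x y : V}
    (w1 : (ZeroOne G).Walk x y) (h1 : Even w1.length)
    (w2 : (ZeroOne G).Walk x y) (h2 : Odd w2.length) : False := by
  have hw : Odd ((w1.reverse.append w2).length) := by
    rw [SimpleGraph.Walk.length_append, SimpleGraph.Walk.length_reverse]
    rcases h1 with ⟨m, hm⟩
    rcases h2 with ⟨m', hm'⟩
    exact ⟨m + m', by omega⟩
  exact (ZeroOne G).loopless.irrefl y (odd_walk_adj hE _ hw)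

end MSCaux

namespace MSCaux
open Finset
open scoped Classical

variable {G : SimpleGraph V}

lemma card_side_le (hE : ∃ p q : V, G.Adj p q) (hunm : IsUnmixed G) (hdom : IsGraphDomain G)
    {A B : Finset V} (hAB : ∀ a ∈ A, ∀ b ∈ B, (ZeroOne G).Adj a b)
    (hA : A.Nonempty) (hB : B.Nonempty) (hdisj : Disjoint A B)
    (hclosed : ∀ x, x ∉ A ∪ B → ∀ y ∈ A ∪ B, ¬(ZeroOne G).Adj x y) :
    B.card ≤ A.card := by
  classical
  have hGAB : ∀ a ∈ A, ∀ b ∈ B, G.Adj a b := fun a ha b hb => (hAB a ha b hb).1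
  have hindepA : ∀ a ∈ A, ∀ a' ∈ A, ¬G.Adj a a' := by
    intro a ha a' ha' haa
    obtain ⟨b, hb⟩ := hB
    exact G.loopless.irrefl a' (square hE (hAB a ha b hb).symm ((hGAB a' ha' b hb).symm) haa)
  have hindepB : ∀ b ∈ B, ∀ b' ∈ B, ¬G.Adj b b' := by
    intro b hb b' hb' hbb
    obtain ⟨a, ha⟩ := hA
    exact G.loopless.irrefl b' (square hE (hAB a ha b hb) (hGAB a ha b' hb') hbb)
  have htrace : ∀ S : Finset V, MinCover G S →
      (A ⊆ S ∧ ∀ b ∈ B, b ∉ S) ∨ (B ⊆ S ∧ ∀ a ∈ A, a ∉ S) := by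
    intro S hS
    by_cases hc : ∃ a ∈ A, a ∈ S
    · obtain ⟨a0, ha0, ha0S⟩ := hc
      have hBout : ∀ b ∈ B, b ∉ S := fun b hb => (H_split (hAB a0 ha0 b hb) hS).1 ha0S
      obtain ⟨b0, hb0⟩ := hB
      refine Or.inl ⟨fun a ha => (H_split (hAB a ha b0 hb0) hS).2 (hBout b0 hb0), hBout⟩
    · push_neg at hc
      obtain ⟨a0, ha0⟩ := hA
      refine Or.inr ⟨fun b hb => ?_, hc⟩
      by_contra hbS
      exact hc a0 ha0 ((H_split (hAB a0 ha0 b hb) hS).2 hbS)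
  have hspreadB : ∀ x, x ∉ A ∪ B → ∀ b ∈ B, G.Adj x b →
      (∀ b' ∈ B, G.Adj x b') ∧ (∀ a ∈ A, ¬G.Adj x a) := by
    intro x hx b hb hxb
    constructor
    · intro b' hb'
      obtain ⟨a, ha⟩ := hA
      exact (square hE (hAB a ha b hb) (hGAB a ha b' hb') hxb.symm).symm
    · intro a ha hxa
      obtain ⟨S, hS, hxS, -⟩ := exists_minCover_avoid hE (G.loopless.irrefl x)
      rcases htrace S hS with ⟨hAin, hBout⟩ | ⟨hBin, hAout⟩
      · rcases hS.1 hxb with h | h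
        · exact hxS h
        · exact hBout b hb h
      · rcases hS.1 hxa with h | h
        · exact hxS h
        · exact hAout a ha h
  set BadB : Finset V := Finset.univ.filter (fun x => x ∉ A ∪ B ∧ ∃ b ∈ B, G.Adj x b) with hBadB
  have hBadB_mem : ∀ {x}, x ∈ BadB ↔ (x ∉ A ∪ B ∧ ∃ b ∈ B, G.Adj x b) := by
    intro x
    simp [hBadB]
  have hBadB_spread : ∀ z ∈ BadB, ∀ b ∈ B, G.Adj z b := by
    intro z hz b hb
    obtain ⟨hz1, b0, hb0, hzb0⟩ := hBadB_mem.1 hz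
    exact (hspreadB z hz1 b0 hb0 hzb0).1 b hb
  have htraceA : ∃ S : Finset V, MinCover G S ∧ A ⊆ S ∧ ∀ b ∈ B, b ∉ S := by
    obtain ⟨I, hsub, hI, hmax⟩ := exists_maxIndep (G := G) (S := B) (fun b hb b' hb' => hindepB b hb b' hb')
    have hS := compl_minCover hE hI hmax
    rcases htrace _ hS with h | ⟨hBin, -⟩
    · exact ⟨_, hS, h.1, h.2⟩
    · obtain ⟨b, hb⟩ := hB
      have := hBin hb
      simp only [Finset.mem_sdiff, Finset.mem_univ, true_and] at this
      exact absurd (hsub hb) this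
  have hL4 : ∀ z ∈ BadB, ∀ w, (ZeroOne G).Adj z w →
      w ∉ A ∪ B ∧ w ∉ BadB ∧ ∀ a ∈ A, ¬G.Adj w a := by
    intro z hz w hzw
    obtain ⟨hz1, b0, hb0, hzb0⟩ := hBadB_mem.1 hz
    have hwAB : w ∉ A ∪ B := by
      intro hw
      exact hclosed z hz1 w hw hzw
    refine ⟨hwAB, ?_, ?_⟩
    · -- w ∉ BadB
      intro hwB
      have hallB : ∀ S : Finset V, MinCover G S → B ⊆ S := by
        intro S hS b hb
        by_cases hzS : z ∈ S
        · have hwS : w ∉ S := (H_split hzw hS).1 hzS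
          rcases hS.1 (hBadB_spread w hwB b hb) with h | h
          · exact absurd h hwS
          · exact h
        · rcases hS.1 (hBadB_spread z hz b hb) with h | h
          · exact absurd h hzS
          · exact h
      obtain ⟨S, hS, -, hBout⟩ := htraceA
      obtain ⟨b, hb⟩ := hB
      exact hBout b hb (hallB S hS hb)
    · -- w not adjacent to A
      intro a0 ha0 hwa0
      have hzb0' : (ZeroOne G).Adj z b0 := by
        refine H_adj_of hE hzb0 ?_
        intro S hS
        by_cases hzS : z ∈ S
        · have hwS : w ∉ S := (H_split hzw hS).1 hzS
          have ha0S : a0 ∈ S := by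
            rcases hS.1 hwa0 with h | h
            · exact absurd h hwS
            · exact h
          rcases htrace S hS with ⟨-, hBout⟩ | ⟨-, hAout⟩
          · exact iff_of_true hzS (hBout b0 hb0)
          · exact absurd ha0S (hAout a0 ha0)
        · have hb0S : b0 ∈ S := by
            rcases hS.1 hzb0 with h | h
            · exact absurd h hzS
            · exact h
          exact iff_of_false hzS (not_not_intro hb0S)
      exact hclosed z hz1 b0 (Finset.mem_union_right _ hb0) hzb0'
  -- construct the special cover D
  have hD : ∃ D : Finset V, MinCover G D ∧ (∀ a ∈ A, a ∉ D) ∧ B ⊆ D ∧ BadB ⊆ D := by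
    set P : Finset V → Prop := fun J => Indep G J ∧ A ⊆ J ∧ ∀ z ∈ BadB, z ∉ J with hP
    have hPA : P A := by
      refine ⟨fun a ha a' ha' => hindepA a ha a' ha', le_refl _, ?_⟩
      intro z hz hzA
      exact (hBadB_mem.1 hz).1 (Finset.mem_union_left _ hzA)
    obtain ⟨I, hImem, hmax⟩ := Finset.exists_max_image
      ((Finset.univ.powerset).filter P) Finset.card ⟨A, Finset.mem_filter.2 ⟨Finset.mem_powerset.2 (Finset.subset_univ _), hPA⟩⟩
    simp only [Finset.mem_filter, Finset.mem_powerset] at hImem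
    obtain ⟨-, hIindep, hIA, hIBad⟩ : True ∧ Indep G I ∧ A ⊆ I ∧ ∀ z ∈ BadB, z ∉ I := by
      exact ⟨trivial, hImem.2.1, hImem.2.2.1, hImem.2.2.2⟩
    have hcardP : ∀ J, P J → J.card ≤ I.card := by
      intro J hJ
      exact hmax J (Finset.mem_filter.2 ⟨Finset.mem_powerset.2 (Finset.subset_univ _), hJ⟩)
    have hImax : ∀ v, v ∉ I → ∃ u ∈ I, G.Adj v u := by
      intro v hv
      by_contra hcon
      push_neg at hcon
      have hins : Indep G (insert v I) := by
        intro p hp q hq hpq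
        rcases Finset.mem_insert.1 hp with hp1 | hp1 <;> rcases Finset.mem_insert.1 hq with hq1 | hq1
        · rw [hp1, hq1] at hpq; exact G.loopless.irrefl v hpq
        · rw [hp1] at hpq; exact hcon q hq1 hpq
        · rw [hq1] at hpq; exact hcon p hp1 hpq.symm
        · exact hIindep hp1 hq1 hpq
      by_cases hvBad : v ∈ BadB
      · -- v has an H-partner w
        obtain ⟨hv1, b0, hb0, hvb0⟩ := hBadB_mem.1 hvBad
        obtain ⟨w, hvw⟩ := exists_H_partner hdom hE hvb0
        obtain ⟨hwAB, hwBad, hwnA⟩ := hL4 v hvBad w hvw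
        have hwI : w ∉ I := fun hwI => hcon w hwI hvw.1
        by_cases hwadj : ∃ u ∈ I, G.Adj w u
        · obtain ⟨u, huI, hwu⟩ := hwadj
          have hBu : ∀ b ∈ B, G.Adj b u := by
            intro b hb
            exact square hE hvw (hBadB_spread v hvBad b hb) hwu
          by_cases huA : u ∈ A
          · exact hwnA u huA hwu
          · by_cases huB : u ∈ B
            · obtain ⟨a, ha⟩ := hA
              exact hIindep (hIA ha) huI (hGAB a ha u huB)
            · have huBad : u ∈ BadB := by
                rw [hBadB_mem]
                refine ⟨?_, ?_⟩
                · intro hu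
                  rcases Finset.mem_union.1 hu with h | h
                  · exact huA h
                  · exact huB h
                · obtain ⟨b, hb⟩ := hB
                  exact ⟨b, hb, (hBu b hb).symm⟩
              exact hIBad u huBad huI
        · push_neg at hwadj
          have hins' : Indep G (insert w I) := by
            intro p hp q hq hpq
            rcases Finset.mem_insert.1 hp with hp1 | hp1 <;> rcases Finset.mem_insert.1 hq with hq1 | hq1
            · rw [hp1, hq1] at hpq; exact G.loopless.irrefl w hpq
            · rw [hp1] at hpq; exact hwadj q hq1 hpq
            · rw [hq1] at hpq; exact hwadj p hp1 hpq.symm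
            · exact hIindep hp1 hq1 hpq
          have hPw : P (insert w I) := by
            refine ⟨hins', hIA.trans (Finset.subset_insert _ _), ?_⟩
            intro z hz hzmem
            rcases Finset.mem_insert.1 hzmem with h | h
            · rw [h] at hz; exact hwBad hz
            · exact hIBad z hz h
          have := hcardP _ hPw
          rw [Finset.card_insert_of_notMem hwI] at this
          omega
      · have hPv : P (insert v I) := by
          refine ⟨hins, hIA.trans (Finset.subset_insert _ _), ?_⟩
          intro z hz hzmem
          rcases Finset.mem_insert.1 hzmem with h | h
          · rw [h] at hz; exact hvBad hz
          · exact hIBad z hz h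
        have := hcardP _ hPv
        rw [Finset.card_insert_of_notMem hv] at this
        omega
    refine ⟨Finset.univ \ I, compl_minCover hE hIindep hImax, ?_, ?_, ?_⟩
    · intro a ha hmem
      simp only [Finset.mem_sdiff, Finset.mem_univ, true_and] at hmem
      exact hmem (hIA ha)
    · intro b hb
      simp only [Finset.mem_sdiff, Finset.mem_univ, true_and]
      intro hbI
      obtain ⟨a, ha⟩ := hA
      exact hIindep (hIA ha) hbI (hGAB a ha b hb)
    · intro z hz
      simp only [Finset.mem_sdiff, Finset.mem_univ, true_and]
      exact hIBad z hz
  obtain ⟨D, hDmin, hDA, hDB, hDBad⟩ := hD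
  -- the swapped cover
  set F : Finset V := (D \ B) ∪ A with hF
  have hcovF : Covers G F := by
    intro p q hpq
    by_cases hpA : p ∈ A
    · exact Or.inl (Finset.mem_union_right _ hpA)
    · by_cases hqA : q ∈ A
      · exact Or.inr (Finset.mem_union_right _ hqA)
      · by_cases hpB : p ∈ B
        · -- q is adjacent to B
          right
          by_cases hqB : q ∈ B
          · exact absurd hpq (hindepB p hpB q hqB)
          · have hqBad : q ∈ BadB := hBadB_mem.2 ⟨by
              intro h
              rcases Finset.mem_union.1 h with h | h
              · exact hqA h
              · exact hqB h, ⟨p, hpB, hpq.symm⟩⟩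
            exact Finset.mem_union_left _ (Finset.mem_sdiff.2 ⟨hDBad hqBad, hqB⟩)
        · by_cases hqB : q ∈ B
          · left
            have hpBad : p ∈ BadB := hBadB_mem.2 ⟨by
              intro h
              rcases Finset.mem_union.1 h with h | h
              · exact hpA h
              · exact hpB h, ⟨q, hqB, hpq⟩⟩
            exact Finset.mem_union_left _ (Finset.mem_sdiff.2 ⟨hDBad hpBad, hpB⟩)
          · rcases hDmin.1 hpq with h | h
            · exact Or.inl (Finset.mem_union_left _ (Finset.mem_sdiff.2 ⟨h, hpB⟩))
            · exact Or.inr (Finset.mem_union_left _ (Finset.mem_sdiff.2 ⟨h, hqB⟩))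
  obtain ⟨F', hF'sub, hF'min⟩ := exists_minCover_subset hE hcovF
  have hcardeq : F'.card = D.card := by
    have := hunm (chi F') (chi D) (minCover_basic hF'min) (minCover_basic hDmin)
    rwa [chi_sum, chi_sum] at this
  have h1 : F'.card ≤ F.card := Finset.card_le_card hF'sub
  have h2 : F.card ≤ (D.card - B.card) + A.card := by
    calc F.card ≤ (D \ B).card + A.card := Finset.card_union_le _ _
    _ = (D.card - B.card) + A.card := by rw [Finset.card_sdiff_of_subset hDB]
  have h3 : B.card ≤ D.card := Finset.card_le_card hDB
  omega

end MSCaux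

namespace MSCaux
open Finset
open scoped Classical

variable {G : SimpleGraph V}

noncomputable def Aside (G : SimpleGraph V) (r : V) : Finset V :=
  Finset.univ.filter (fun u => ∃ w : (ZeroOne G).Walk r u, Even w.length)

noncomputable def Bside (G : SimpleGraph V) (r : V) : Finset V :=
  Finset.univ.filter (fun u => ∃ w : (ZeroOne G).Walk r u, Odd w.length)

lemma mem_Aside {r u : V} : u ∈ Aside G r ↔ ∃ w : (ZeroOne G).Walk r u, Even w.length := by
  simp [Aside]

lemma mem_Bside {r u : V} : u ∈ Bside G r ↔ ∃ w : (ZeroOne G).Walk r u, Odd w.length := by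
  simp [Bside]

lemma root_mem_Aside (r : V) : r ∈ Aside G r :=
  mem_Aside.2 ⟨SimpleGraph.Walk.nil, by simp⟩

lemma disjoint_sides (hE : ∃ p q : V, G.Adj p q) (r : V) : Disjoint (Aside G r) (Bside G r) := by
  rw [Finset.disjoint_left]
  intro u hu hu'
  obtain ⟨w1, h1⟩ := mem_Aside.1 hu
  obtain ⟨w2, h2⟩ := mem_Bside.1 hu'
  exact not_even_and_odd_walk hE w1 h1 w2 h2

lemma sides_complete (hE : ∃ p q : V, G.Adj p q) {r a b : V} (ha : a ∈ Aside G r)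
    (hb : b ∈ Bside G r) : (ZeroOne G).Adj a b := by
  obtain ⟨w1, h1⟩ := mem_Aside.1 ha
  obtain ⟨w2, h2⟩ := mem_Bside.1 hb
  refine odd_walk_adj hE (w1.reverse.append w2) ?_
  rw [SimpleGraph.Walk.length_append, SimpleGraph.Walk.length_reverse]
  rcases h1 with ⟨m, hm⟩
  rcases h2 with ⟨m', hm'⟩
  exact ⟨m + m', by omega⟩

lemma sides_closed {r x y : V} (hx : x ∉ Aside G r ∪ Bside G r)
    (hy : y ∈ Aside G r ∪ Bside G r) (hxy : (ZeroOne G).Adj x y) : False := by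
  apply hx
  rcases Finset.mem_union.1 hy with h | h
  · obtain ⟨w, hw⟩ := mem_Aside.1 h
    refine Finset.mem_union_right _ (mem_Bside.2 ⟨w.concat hxy.symm, ?_⟩)
    rw [SimpleGraph.Walk.length_concat]
    rcases hw with ⟨m, hm⟩
    exact ⟨m, by omega⟩
  · obtain ⟨w, hw⟩ := mem_Bside.1 h
    refine Finset.mem_union_left _ (mem_Aside.2 ⟨w.concat hxy.symm, ?_⟩)
    rw [SimpleGraph.Walk.length_concat]
    rcases hw with ⟨m, hm⟩
    exact ⟨m + 1, by omega⟩

lemma mem_sides_of_reachable {r v : V} (h : (ZeroOne G).Reachable r v) :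
    v ∈ Aside G r ∪ Bside G r := by
  obtain ⟨w⟩ := h
  rcases Nat.even_or_odd w.length with he | ho
  · exact Finset.mem_union_left _ (mem_Aside.2 ⟨w, he⟩)
  · exact Finset.mem_union_right _ (mem_Bside.2 ⟨w, ho⟩)

theorem msc_of_unmixed_domain (hunm : IsUnmixed G) (hdom : IsGraphDomain G)
    (hE : ∃ p q : V, G.Adj p q) : SatisfiesMSC G := by
  classical
  -- each root of a non-isolated component has equal sides
  have hBne : ∀ r : V, (∃ x, G.Adj r x) → (Bside G r).Nonempty := by
    intro r hr
    obtain ⟨x, hx⟩ := hr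
    obtain ⟨j, hj⟩ := exists_H_partner hdom hE hx
    exact ⟨j, mem_Bside.2 ⟨SimpleGraph.Walk.cons hj SimpleGraph.Walk.nil, by simp⟩⟩
  have hcards : ∀ r : V, (∃ x, G.Adj r x) → (Aside G r).card = (Bside G r).card := by
    intro r hr
    have h1 : (Bside G r).card ≤ (Aside G r).card :=
      card_side_le hE hunm hdom (fun a ha b hb => sides_complete hE ha hb)
        ⟨r, root_mem_Aside r⟩ (hBne r hr) (disjoint_sides hE r)
        (fun x hx y hy hxy => sides_closed hx hy hxy)
    have h2 : (Aside G r).card ≤ (Bside G r).card :=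
      card_side_le hE hunm hdom (fun b hb a ha => (sides_complete hE ha hb).symm)
        (hBne r hr) ⟨r, root_mem_Aside r⟩ ((disjoint_sides hE r).symm)
        (fun x hx y hy hxy => sides_closed (by rwa [Finset.union_comm]) (by rwa [Finset.union_comm] at hy) hxy)
    omega
  -- choose involutions on each component
  have hequiv : ∀ r : V, (∃ x, G.Adj r x) → ∃ φ : V → V,
      (∀ u ∈ Aside G r, φ u ∈ Bside G r) ∧ (∀ u ∈ Bside G r, φ u ∈ Aside G r) ∧
      (∀ u ∈ Aside G r ∪ Bside G r, φ (φ u) = u) := by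
    intro r hr
    have e : {u // u ∈ Aside G r} ≃ {u // u ∈ Bside G r} :=
      Finset.equivOfCardEq (hcards r hr)
    have hdis := Finset.disjoint_left.1 (disjoint_sides hE r)
    refine ⟨fun u => if h : u ∈ Aside G r then (e ⟨u, h⟩ : {u // u ∈ Bside G r}).1
      else if h' : u ∈ Bside G r then (e.symm ⟨u, h'⟩ : {u // u ∈ Aside G r}).1 else u, ?_, ?_, ?_⟩
    · intro u hu
      dsimp only
      rw [dif_pos hu]
      exact (e ⟨u, hu⟩).2
    · intro u hu
      dsimp only
      rw [dif_neg (fun h => hdis h hu), dif_pos hu]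
      exact (e.symm ⟨u, hu⟩).2
    · intro u hu
      dsimp only
      rcases Finset.mem_union.1 hu with h | h
      · rw [dif_pos h]
        have hb := (e ⟨u, h⟩).2
        rw [dif_neg (fun h' => hdis h' hb), dif_pos hb]
        have : (⟨(e ⟨u, h⟩).1, hb⟩ : {u // u ∈ Bside G r}) = e ⟨u, h⟩ := rfl
        rw [this, e.symm_apply_apply]
      · rw [dif_neg (fun h' => hdis h' h), dif_pos h]
        have ha := (e.symm ⟨u, h⟩).2
        rw [dif_pos ha]
        have : (⟨(e.symm ⟨u, h⟩).1, ha⟩ : {u // u ∈ Aside G r}) = e.symm ⟨u, h⟩ := rfl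
        rw [this, e.apply_symm_apply]
  choose φf hφ1 hφ2 hφ3 using hequiv
  set ψ : V → V → V := fun r => if h : ∃ x, G.Adj r x then φf r h else id with hψ
  have hψ1 : ∀ r, (∃ x, G.Adj r x) → ∀ u ∈ Aside G r, ψ r u ∈ Bside G r := by
    intro r hr u hu
    simp only [hψ]
    rw [dif_pos hr]
    exact hφ1 r hr u hu
  have hψ2 : ∀ r, (∃ x, G.Adj r x) → ∀ u ∈ Bside G r, ψ r u ∈ Aside G r := by
    intro r hr u hu
    simp only [hψ]
    rw [dif_pos hr]
    exact hφ2 r hr u hu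
  have hψ3 : ∀ r, (∃ x, G.Adj r x) → ∀ u ∈ Aside G r ∪ Bside G r, ψ r (ψ r u) = u := by
    intro r hr u hu
    simp only [hψ]
    rw [dif_pos hr]
    exact hφ3 r hr u hu
  set root : V → V := fun v => ((ZeroOne G).connectedComponentMk v).out with hroot
  have hreach : ∀ v : V, (ZeroOne G).Reachable (root v) v := by
    intro v
    apply SimpleGraph.ConnectedComponent.exact
    simp only [hroot]
    exact ((ZeroOne G).connectedComponentMk v).out_eq
  have hrootnon : ∀ v : V, (∃ x, G.Adj v x) → ∃ x, G.Adj (root v) x := by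
    intro v hv
    obtain ⟨w⟩ := hreach v
    generalize hg : root v = rv at w ⊢
    cases w with
    | nil => exact hv
    | cons h _ => exact ⟨_, h.1⟩
  have hrootadj : ∀ v w : V, (ZeroOne G).Adj v w → root v = root w := by
    intro v w hvw
    simp only [hroot]
    rw [SimpleGraph.ConnectedComponent.sound hvw.reachable]
  set pair : V → V := fun v => ψ (root v) v with hpair
  have hmemside : ∀ v : V, v ∈ Aside G (root v) ∪ Bside G (root v) :=
    fun v => mem_sides_of_reachable (hreach v)
  have hpairadj : ∀ v : V, (∃ x, G.Adj v x) → (ZeroOne G).Adj v (pair v) := by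
    intro v hv
    have hr := hrootnon v hv
    simp only [hpair]
    rcases Finset.mem_union.1 (hmemside v) with h | h
    · exact sides_complete hE h (hψ1 _ hr v h)
    · exact (sides_complete hE (hψ2 _ hr v h) h).symm
  have hpairpair : ∀ v : V, (∃ x, G.Adj v x) → pair (pair v) = v := by
    intro v hv
    have hr := hrootnon v hv
    have hadj := hpairadj v hv
    have hroots : root (pair v) = root v := (hrootadj v (pair v) hadj).symm
    show ψ (root (pair v)) (pair v) = v
    rw [hroots]
    exact hψ3 (root v) hr v (hmemside v)
  -- build the matching subgraph
  refine ⟨{ verts := {v : V | ∃ w, G.Adj v w},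
            Adj := fun a b => (ZeroOne G).Adj a b ∧ pair a = b ∧ pair b = a,
            adj_sub := fun h => h.1.1,
            edge_vert := fun h => ⟨_, h.1.1⟩,
            symm := ⟨fun a b h => ⟨h.1.symm, h.2.2, h.2.1⟩⟩ }, rfl, ?_, ?_, ?_⟩
  · obtain ⟨p, q, hpq⟩ := hE
    exact ⟨p, q, hpq⟩
  · intro v hv
    simp only [Set.mem_setOf_eq] at hv
    refine ⟨pair v, ⟨hpairadj v hv, rfl, hpairpair v hv⟩, ?_⟩
    intro y hy
    exact hy.2.1.symm
  · intro i j hij i' j' hii' hjj'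
    exact square hE hij.1 hii' hjj'

end MSCaux

namespace MSCaux
open Finset
open scoped Classical

variable {G : SimpleGraph V}

lemma edge_of_domain [Nonempty V] (hdom : IsGraphDomain G) : ∃ p q : V, G.Adj p q := by
  by_contra hno
  push_neg at hno
  set v0 : V := Classical.arbitrary V with hv0
  set e : V → ℕ := fun v => if v = v0 then 1 else 0 with he
  have hecov : ∀ k : ℕ, IsCover G k e := by
    intro k
    constructor
    · rw [ne_zero_iff]
      refine ⟨v0, ?_⟩
      simp [he]
    · intro i j hij
      exact absurd hij (hno i j)
  have hebasic : IsBasicCover G 1 e := by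
    refine ⟨hecov 1, ?_⟩
    rintro ⟨b, c, hb, hc, habc⟩
    obtain ⟨vb, hvb⟩ := ne_zero_iff.1 hb.1
    obtain ⟨vc, hvc⟩ := ne_zero_iff.1 hc.1
    have h1 : (1:ℕ) ≤ ∑ v, b v := Finset.single_le_sum (f := b) (fun v _ => Nat.zero_le _) (Finset.mem_univ vb) |>.trans' (by omega)
    have h2 : (1:ℕ) ≤ ∑ v, c v := Finset.single_le_sum (f := c) (fun v _ => Nat.zero_le _) (Finset.mem_univ vc) |>.trans' (by omega)
    have h3 : ∑ v, e v = 1 := by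
      simp only [he]
      rw [Finset.sum_ite_eq' Finset.univ v0 (fun _ => 1)]
      simp
    have h4 : ∑ v, e v = (∑ v, b v) + (∑ v, c v) := by
      rw [habc]
      simp only [Pi.add_apply]
      rw [Finset.sum_add_distrib]
    omega
  have := hdom 2 0 (by omega) (fun _ => e) (fun _ => e) (fun _ => hebasic) (fun q => q.elim0)
  apply this.2
  refine ⟨e, e, hecov 2, hecov 0, ?_⟩
  funext v
  simp only [Pi.add_apply, Finset.sum_apply]
  rw [Fin.sum_univ_two]
  simp

lemma matching_edge_sum {M : G.Subgraph}
    (hsq : ∀ i j : V, M.Adj i j → ∀ i' j' : V, G.Adj i i' → G.Adj j j' → G.Adj i' j')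
    {k : ℕ} (hk : 1 ≤ k) {a : V → ℕ} (ha : IsBasicCover G k a) {i j : V} (hij : M.Adj i j) :
    a i + a j = k := by
  have hGij := M.adj_sub hij
  have hge := ha.1.2 i j hGij
  by_contra hne'
  have hgt : k + 1 ≤ a i + a j := by omega
  have hsq' := hsq i j hij
  have hred : ∀ v w : V, G.Adj v w → 1 ≤ a v → k ≤ a v + a w - 1 →
      (∀ v' : V, G.Adj v v' → k ≤ (a v - 1) + a v') → False := by
    intro v w hvw h1 hvw1 h2
    apply ha.2
    refine ⟨fun u => a u - (if u = v then 1 else 0), fun u => if u = v then 1 else 0,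
      ⟨?_, ?_⟩, ⟨?_, ?_⟩, ?_⟩
    · rw [ne_zero_iff]
      by_cases hav : 2 ≤ a v
      · refine ⟨v, ?_⟩
        try dsimp only
        rw [if_pos rfl]
        omega
      · have := h2 w hvw
        refine ⟨w, ?_⟩
        try dsimp only
        rw [if_neg hvw.ne']
        omega
    · intro p q hpq
      try dsimp only
      by_cases hp : p = v
      · subst hp
        rw [if_pos rfl, if_neg (fun hh : q = p => hpq.ne hh.symm)]
        have := h2 q hpq
        omega
      · rw [if_neg hp]
        by_cases hq : q = v
        · subst hq
          rw [if_pos rfl]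
          have := h2 p hpq.symm
          omega
        · rw [if_neg hq]
          have := ha.1.2 p q hpq
          omega
    · rw [ne_zero_iff]
      refine ⟨v, ?_⟩
      try dsimp only
      rw [if_pos rfl]
      omega
    · intro p q _
      exact Nat.zero_le _
    · funext u
      show a u = (a u - (if u = v then 1 else 0)) + (if u = v then 1 else 0)
      by_cases hu : u = v
      · rw [if_pos hu]
        subst hu
        omega
      · rw [if_neg hu]
        omega
  by_cases hi0 : a i = 0
  · exact hred j i hGij.symm (by omega) (by omega)
      (fun v' hv' => by have := ha.1.2 j v' hv'; omega)
  · by_cases hj0 : a j = 0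
    · exact hred i j hGij (by omega) (by omega)
        (fun v' hv' => by have := ha.1.2 i v' hv'; omega)
    · by_cases hir : ∀ v' : V, G.Adj i v' → k ≤ (a i - 1) + a v'
      · exact hred i j hGij (by omega) (by omega) hir
      · push_neg at hir
        obtain ⟨i', hii', hi'⟩ := hir
        by_cases hjr : ∀ v' : V, G.Adj j v' → k ≤ (a j - 1) + a v'
        · exact hred j i hGij.symm (by omega) (by omega) hjr
        · push_neg at hjr
          obtain ⟨j', hjj', hj'⟩ := hjr
          have hadj := hsq' i' j' hii' hjj'
          have := ha.1.2 i' j' hadj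
          omega

lemma iso_val_zero (hE : ∃ p q : V, G.Adj p q) {k : ℕ} (hk : 1 ≤ k) {a : V → ℕ}
    (ha : IsBasicCover G k a) {v : V} (hv : ¬∃ w, G.Adj v w) : a v = 0 := by
  by_contra hav
  obtain ⟨p, q, hpq⟩ := hE
  have hp : p ≠ v := fun h => hv ⟨q, h ▸ hpq⟩
  have hq : q ≠ v := fun h => hv ⟨p, h ▸ hpq.symm⟩
  have hsum := ha.1.2 p q hpq
  apply ha.2
  refine ⟨fun u => a u - (if u = v then 1 else 0), fun u => if u = v then 1 else 0,
    ⟨?_, ?_⟩, ⟨?_, ?_⟩, ?_⟩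
  · rw [ne_zero_iff]
    by_cases h1 : 1 ≤ a p
    · refine ⟨p, ?_⟩
      try dsimp only
      rw [if_neg hp]
      omega
    · refine ⟨q, ?_⟩
      try dsimp only
      rw [if_neg hq]
      omega
  · intro i j hij
    have hi : i ≠ v := fun h => hv ⟨j, h ▸ hij⟩
    have hj : j ≠ v := fun h => hv ⟨i, h ▸ hij.symm⟩
    have := ha.1.2 i j hij
    try dsimp only
    rw [if_neg hi, if_neg hj]
    omega
  · rw [ne_zero_iff]
    refine ⟨v, ?_⟩
    try dsimp only
    rw [if_pos rfl]
    omega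
  · intro p q _
    exact Nat.zero_le _
  · funext u
    show a u = (a u - (if u = v then 1 else 0)) + (if u = v then 1 else 0)
    by_cases hu : u = v
    · rw [if_pos hu]
      subst hu
      omega
    · rw [if_neg hu]
      omega

end MSCaux

namespace MSCaux
open Finset
open scoped Classical

variable {G : SimpleGraph V}

lemma unmixed_and_domain_of_msc (h : SatisfiesMSC G) : IsUnmixed G ∧ IsGraphDomain G := by
  classical
  obtain ⟨M, hverts, hne, hmatch, hsq⟩ := h
  have hE : ∃ p q : V, G.Adj p q := by
    obtain ⟨v, hv⟩ := hne
    rw [hverts] at hv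
    obtain ⟨w, hw⟩ := hv
    exact ⟨v, w, hw⟩
  have hne_v : ∀ v : V, v ∈ M.verts ↔ ∃ w, G.Adj v w := fun v => by
    rw [hverts]; exact Iff.rfl
  set ptot : V → V := fun v => if h : v ∈ M.verts then (hmatch h).choose else v with hptot
  have hpadj : ∀ v, v ∈ M.verts → M.Adj v (ptot v) := by
    intro v hv
    simp only [hptot]
    rw [dif_pos hv]
    exact (hmatch hv).choose_spec.1
  have hpmem : ∀ v, v ∈ M.verts → ptot v ∈ M.verts :=
    fun v hv => M.edge_vert (hpadj v hv).symm
  set P : Finset V := Finset.univ.filter (fun v => v ∈ M.verts) with hP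
  have hmemP : ∀ {v : V}, v ∈ P ↔ v ∈ M.verts := by
    intro v
    simp [hP]
  have hpP : ∀ v ∈ P, ptot v ∈ P := fun v hv => hmemP.2 (hpmem v (hmemP.1 hv))
  have hpinv : ∀ v ∈ P, ptot (ptot v) = v := by
    intro v hv
    have hvM := hmemP.1 hv
    have h2 : M.Adj (ptot v) v := (hpadj v hvM).symm
    show (if h : ptot v ∈ M.verts then (hmatch h).choose else ptot v) = v
    rw [dif_pos (hpmem v hvM)]
    exact ((hmatch (hpmem v hvM)).choose_spec.2 v h2).symm
  have hsum : ∀ (k : ℕ), 1 ≤ k → ∀ a : V → ℕ, IsBasicCover G k a →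
      2 * ∑ v, a v = k * P.card := by
    intro k hk a ha
    have hz : ∀ v, v ∉ P → a v = 0 := by
      intro v hvP
      refine iso_val_zero hE hk ha ?_
      intro hex
      exact hvP (hmemP.2 ((hne_v v).2 hex))
    have h0 : ∑ v, a v = ∑ v ∈ P, a v :=
      (Finset.sum_subset (Finset.subset_univ P) (fun v _ hv => hz v hv)).symm
    have h1 : ∑ v ∈ P, (a v + a (ptot v)) = ∑ _v ∈ P, k := by
      refine Finset.sum_congr rfl ?_
      intro v hv
      exact matching_edge_sum hsq hk ha (hpadj v (hmemP.1 hv))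
    have h2 : ∑ v ∈ P, a (ptot v) = ∑ v ∈ P, a v := by
      refine Finset.sum_nbij' (i := fun v => ptot v) (j := fun v => ptot v)
        ?_ ?_ ?_ ?_ ?_
      · intro v hv; exact hpP v hv
      · intro v hv; exact hpP v hv
      · intro v hv; exact hpinv v hv
      · intro v hv; exact hpinv v hv
      · intro v hv; rfl
    rw [Finset.sum_add_distrib, h2] at h1
    rw [Finset.sum_const, smul_eq_mul] at h1
    rw [h0, mul_comm k P.card]
    omega
  constructor
  · intro a b ha hb
    have h1 := hsum 1 le_rfl a ha
    have h2 := hsum 1 le_rfl b hb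
    omega
  · intro s t hst f g hf hg
    set u : V → ℕ := (∑ p, f p) + (∑ q, g q) with hu
    have huv : ∀ v, u v = (∑ p, f p v) + (∑ q, g q v) := by
      intro v
      simp only [hu, Pi.add_apply, Finset.sum_apply]
    refine ⟨⟨?_, ?_⟩, ?_⟩
    · rw [ne_zero_iff]
      rcases Nat.lt_or_ge s 1 with hs | hs
      · have ht : 1 ≤ t := by omega
        obtain ⟨v, hv⟩ := ne_zero_iff.1 (hg ⟨0, by omega⟩).1.1
        refine ⟨v, ?_⟩
        rw [huv]
        have h3 : g ⟨0, by omega⟩ v ≤ ∑ q, g q v :=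
          Finset.single_le_sum (f := fun q => g q v) (fun q _ => Nat.zero_le _) (Finset.mem_univ _)
        omega
      · obtain ⟨v, hv⟩ := ne_zero_iff.1 (hf ⟨0, by omega⟩).1.1
        refine ⟨v, ?_⟩
        rw [huv]
        have h3 : f ⟨0, by omega⟩ v ≤ ∑ p, f p v :=
          Finset.single_le_sum (f := fun p => f p v) (fun p _ => Nat.zero_le _) (Finset.mem_univ _)
        omega
    · intro i j hij
      rw [huv, huv]
      have h1 : ∑ p : Fin s, (1:ℕ) ≤ ∑ p, (f p i + f p j) :=
        Finset.sum_le_sum (fun p _ => (hf p).1.2 i j hij)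
      have h2 : ∑ q : Fin t, (2:ℕ) ≤ ∑ q, (g q i + g q j) :=
        Finset.sum_le_sum (fun q _ => (hg q).1.2 i j hij)
      have e1 : ∑ _p : Fin s, (1:ℕ) = s := by simp
      have e2 : ∑ _q : Fin t, (2:ℕ) = 2 * t := by simp [mul_comm]
      rw [Finset.sum_add_distrib] at h1 h2
      omega
    · rintro ⟨b, c, hb, hc, habc⟩
      obtain ⟨v0, hv0⟩ := ne_zero_iff.1 hc.1
      have hbc : ∀ v, u v = b v + c v := fun v => congrFun habc v
      by_cases hvm : v0 ∈ M.verts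
      · have hsum0 : u v0 + u (ptot v0) = s + 2 * t := by
          rw [huv, huv]
          have h1 : ∑ p, (f p v0 + f p (ptot v0)) = ∑ _p : Fin s, (1:ℕ) :=
            Finset.sum_congr rfl (fun p _ =>
              matching_edge_sum hsq le_rfl (hf p) (hpadj v0 hvm))
          have h2 : ∑ q, (g q v0 + g q (ptot v0)) = ∑ _q : Fin t, (2:ℕ) :=
            Finset.sum_congr rfl (fun q _ =>
              matching_edge_sum hsq (by omega) (hg q) (hpadj v0 hvm))
          have e1 : ∑ _p : Fin s, (1:ℕ) = s := by simp
          have e2 : ∑ _q : Fin t, (2:ℕ) = 2 * t := by simp [mul_comm]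
          rw [Finset.sum_add_distrib] at h1 h2
          omega
        have hbcov := hb.2 v0 (ptot v0) (M.adj_sub (hpadj v0 hvm))
        have hx1 := hbc v0
        have hx2 := hbc (ptot v0)
        omega
      · have hz : u v0 = 0 := by
          rw [huv]
          have hziso : ¬∃ w, G.Adj v0 w := fun hex => hvm ((hne_v v0).2 hex)
          have hf0 : ∀ p, f p v0 = 0 := fun p => iso_val_zero hE le_rfl (hf p) hziso
          have hg0 : ∀ q, g q v0 = 0 := fun q => iso_val_zero hE (by omega) (hg q) hziso
          rw [Finset.sum_congr rfl (fun p _ => hf0 p), Finset.sum_congr rfl (fun q _ => hg0 q)]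
          simp
        have := hbc v0
        omega

end MSCaux

-- END --

/-- A finite simple graph `G` satisfies MSC if and only if `G` is an unmixed
domain. -/
theorem msc_iff_unmixed_domain [Nonempty V] (G : SimpleGraph V) :
    SatisfiesMSC G ↔ (IsUnmixed G ∧ IsGraphDomain G) := by
  constructor
  · exact MSCaux.unmixed_and_domain_of_msc
  · rintro ⟨hunm, hdom⟩
    exact MSCaux.msc_of_unmixed_domain hunm hdom (MSCaux.edge_of_domain hdom)
end

section
/- Let {i,j} be an edge of a finite simple graph G. If a(i)+a(j)=1 for every basic 1-cover a of G, then for every neighbor i' of i in G and every neighbor j' of j in G, one has i' ≠ j' and {i',j'} is an edge of G. -/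
variable {V : Type*} [Fintype V] [DecidableEq V]

/-- Let `{i, j}` be an edge of `G`.  If `a i + a j = 1` for every basic
`1`-cover `a` of `G`, then for every neighbour `i'` of `i` and every neighbour `j'` of `j`
one has `i' ≠ j'` and `{i', j'}` is an edge of `G`. -/
theorem basic_one_covers_give_square (G : SimpleGraph V) (i j : V) (hij : G.Adj i j)
    (h : ∀ a : V → ℕ, IsBasicCover G 1 a → a i + a j = 1) :
    ∀ i' j' : V, G.Adj i i' → G.Adj j j' → i' ≠ j' ∧ G.Adj i' j' := by
  classical
  intro i' j' hii' hjj'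
  by_contra hcon
  push_neg at hcon
  set S : Finset V := {i', j'} with hS
  have hSindep : ∀ x ∈ S, ∀ y ∈ S, ¬ G.Adj x y := by
    intro x hx y hy hxy
    simp only [hS, Finset.mem_insert, Finset.mem_singleton] at hx hy
    rcases hx with rfl | rfl <;> rcases hy with rfl | rfl
    · exact hxy.ne rfl
    · exact hcon hxy.ne hxy
    · exact hcon hxy.symm.ne hxy.symm
    · exact hxy.ne rfl
  obtain ⟨I, ⟨hIindep, hSI⟩, hImax⟩ :=
    Set.Finite.exists_maximalFor (fun t : Finset V => t.card)
      {t : Finset V | (∀ x ∈ t, ∀ y ∈ t, ¬ G.Adj x y) ∧ S ⊆ t} (Set.toFinite _)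
      ⟨S, hSindep, subset_rfl⟩
  have hmax : ∀ v, v ∉ I → ∃ w ∈ I, G.Adj v w := by
    intro v hv
    by_contra hno
    push_neg at hno
    have hI' : (insert v I) ∈ {t : Finset V | (∀ x ∈ t, ∀ y ∈ t, ¬ G.Adj x y) ∧ S ⊆ t} := by
      constructor
      · intro x hx y hy hxy
        rcases Finset.mem_insert.mp hx with hx | hx
        · rcases Finset.mem_insert.mp hy with hy | hy
          · exact hxy.ne (hx.trans hy.symm)
          · exact hno y hy (hx ▸ hxy)
        · rcases Finset.mem_insert.mp hy with hy | hy
          · exact hno x hx (hy ▸ hxy.symm)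
          · exact hIindep x hx y hy hxy
      · exact hSI.trans (Finset.subset_insert _ _)
    have hle : I.card ≤ (insert v I).card := Finset.card_le_card (Finset.subset_insert _ _)
    have heq : (insert v I).card ≤ I.card := hImax hI' hle
    rw [Finset.card_insert_of_notMem hv] at heq
    omega
  set a : V → ℕ := fun v => if v ∈ I then 0 else 1 with ha
  have hi'S : i' ∈ S := by simp [hS]
  have hj'S : j' ∈ S := by simp [hS]
  have hiI : i ∉ I := fun hi => hIindep i hi i' (hSI hi'S) hii'
  have hjI : j ∉ I := fun hj => hIindep j hj j' (hSI hj'S) hjj'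
  have hcover : IsCover G 1 a := by
    constructor
    · intro h0
      have hai : a i = 0 := by rw [h0]; rfl
      simp [ha, hiI] at hai
    · intro u w huw
      by_cases hu : u ∈ I
      · have hw : w ∉ I := fun hw => hIindep u hu w hw huw
        simp [ha, hw]
      · simp [ha, hu]
  have hbasic : IsBasicCover G 1 a := by
    refine ⟨hcover, ?_⟩
    rintro ⟨b, c, hb, hc, habc⟩
    obtain ⟨v, hv⟩ : ∃ v, c v ≠ 0 := by
      by_contra hall
      push_neg at hall
      exact hc.1 (funext fun v => hall v)
    have hav : a v = b v + c v := congrFun habc v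
    have hvI : v ∉ I := by
      intro hvI
      simp [ha, hvI] at hav
      omega
    obtain ⟨w, hwI, hvw⟩ := hmax v hvI
    have haw : a w = b w + c w := congrFun habc w
    have h1 := hb.2 v w hvw
    simp [ha, hvI] at hav
    simp [ha, hwI] at haw
    omega
  have hfin := h a hbasic
  simp [ha, hiI, hjI] at hfin
end

section
/- Let {i,j} be an edge of a finite simple graph G. Suppose that for every neighbor i' of i in G and every neighbor j' of j in G, one has i' ≠ j' and {i',j'} is an edge of G. Then for every integer k ≥ 1 and every basic k-cover a of G, a(i)+a(j)=k. -/
variable {V : Type*} [Fintype V] [DecidableEq V]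

/-- Let `{i, j}` be an edge of `G`.  If for every neighbour `i'` of `i` and
every neighbour `j'` of `j` one has `i' ≠ j'` and `{i', j'}` is an edge of `G`, then for
every `k ≥ 1` and every basic `k`-cover `a` of `G`, `a i + a j = k`. -/
theorem square_gives_basic_cover_values (G : SimpleGraph V) (i j : V) (hij : G.Adj i j)
    (h : ∀ i' j' : V, G.Adj i i' → G.Adj j j' → i' ≠ j' ∧ G.Adj i' j') :
    ∀ k : ℕ, 1 ≤ k → ∀ a : V → ℕ, IsBasicCover G k a → a i + a j = k := by
  rintro k hk a ⟨⟨hne, hcov⟩, hbasic⟩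
  by_contra hne2
  have hge : k + 1 ≤ a i + a j := by
    have := hcov i j hij
    omega
  -- key: if we can decrease `a` at a vertex `v` (with an edge `v w`) and stay a cover,
  -- then `a` is not basic, contradiction.
  have key : ∀ v w : V, G.Adj v w → 1 ≤ a v →
      (∀ u, G.Adj v u → k + 1 ≤ a v + a u) → False := by
    intro v w hvw hav hall
    apply hbasic
    refine ⟨Function.update a v (a v - 1), Pi.single v 1, ⟨?_, ?_⟩, ⟨?_, ?_⟩, ?_⟩
    · -- b ≠ 0
      intro hb0
      by_cases haw : 1 ≤ a w
      · have : Function.update a v (a v - 1) w = 0 := by rw [hb0]; rfl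
        rw [Function.update_of_ne hvw.ne'] at this
        omega
      · have h1 := hall w hvw
        have : Function.update a v (a v - 1) v = 0 := by rw [hb0]; rfl
        rw [Function.update_self] at this
        omega
    · -- b is a k-cover
      intro x y hxy
      by_cases hx : x = v
      · subst hx
        have h1 := hall y hxy
        rw [Function.update_self, Function.update_of_ne hxy.ne']
        omega
      · by_cases hy : y = v
        · subst hy
          have h1 := hall x hxy.symm
          rw [Function.update_self, Function.update_of_ne hx]
          omega
        · rw [Function.update_of_ne hx, Function.update_of_ne hy]
          exact hcov x y hxy
    · -- c ≠ 0
      intro hc0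
      have : (Pi.single v 1 : V → ℕ) v = 0 := by rw [hc0]; rfl
      rw [Pi.single_eq_same] at this
      omega
    · intro x y _; omega
    · funext x
      by_cases hx : x = v
      · subst hx
        simp only [Pi.add_apply, Function.update_self, Pi.single_eq_same]
        omega
      · simp only [Pi.add_apply, Function.update_of_ne hx, Pi.single_eq_of_ne hx]
        omega
  by_cases hi : ∀ u, G.Adj i u → k + 1 ≤ a i + a u
  · by_cases hai : 1 ≤ a i
    · exact key i j hij hai hi
    · -- a i = 0, hence a j ≥ k + 1
      have haj : k + 1 ≤ a j := by omega
      refine key j i hij.symm (by omega) ?_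
      intro u hu
      have := hcov j u hu
      omega
  · push_neg at hi
    obtain ⟨y, hy, hyk⟩ := hi
    have hyk' : a i + a y = k := by
      have := hcov i y hy
      omega
    by_cases hj : ∀ u, G.Adj j u → k + 1 ≤ a j + a u
    · by_cases haj : 1 ≤ a j
      · exact key j i hij.symm haj hj
      · -- a j = 0, hence a i ≥ k + 1, contradicting the tight neighbour of i
        omega
    · push_neg at hj
      obtain ⟨z, hz, hzk⟩ := hj
      have hzk' : a j + a z = k := by
        have := hcov j z hz
        omega
      obtain ⟨hyz, hadj⟩ := h y z hy hz
      have := hcov y z hadj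
      omega
end

section
/- A finite simple graph G is a domain if and only if G has at least one edge and for each non-isolated vertex i of G there exists a neighbor j of i such that: a(i)+a(j)=1 for every basic 1-cover a of G, and b(i)+b(j)=2 for every basic 2-cover b of G. -/
variable {V : Type*} [Fintype V] [DecidableEq V]

section AuxDomain

variable {G : SimpleGraph V} {k : ℕ} {a : V → ℕ} {v x y : V}

/-- The indicator function of a single vertex. -/
def single1 (v : V) : V → ℕ := fun w => if w = v then 1 else 0

lemma single1_ne_zero (v : V) : single1 v ≠ (0 : V → ℕ) := by
  intro h
  have := congrFun h v
  simp [single1] at this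

/-- Subtract one from the value at `v`. -/
def subOne (a : V → ℕ) (v : V) : V → ℕ := fun w => if w = v then a v - 1 else a w

lemma subOne_add (h : 1 ≤ a v) : a = subOne a v + single1 v := by
  funext w
  simp only [Pi.add_apply, subOne, single1]
  by_cases h2 : w = v
  · rw [if_pos h2, if_pos h2, h2]
    omega
  · rw [if_neg h2, if_neg h2]
    omega

lemma one_le_sum_of_ne_zero {a : V → ℕ} (h : a ≠ 0) : 1 ≤ ∑ w, a w := by
  obtain ⟨w, hw⟩ := Function.ne_iff.mp h
  have hw' : 1 ≤ a w := Nat.pos_of_ne_zero hw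
  exact le_trans hw' (Finset.single_le_sum (fun i _ => Nat.zero_le _) (Finset.mem_univ w))

lemma basic_no_sub (hb : IsBasicCover G k a) (hv : 1 ≤ a v) :
    ¬ IsCover G k (subOne a v) := fun hc =>
  hb.2 ⟨subOne a v, single1 v, hc,
    ⟨single1_ne_zero v, fun i j _ => Nat.zero_le _⟩, subOne_add hv⟩

lemma basic_tight (hb : IsBasicCover G k a) (hv : 1 ≤ a v) (hne : subOne a v ≠ 0) :
    ∃ j, G.Adj v j ∧ a v + a j ≤ k := by
  by_contra h'
  push_neg at h'
  apply basic_no_sub hb hv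
  refine ⟨hne, fun i j hij => ?_⟩
  simp only [subOne]
  rcases eq_or_ne i v with rfl | hi
  · have hj : j ≠ i := fun h => G.loopless.irrefl i (h ▸ hij)
    rw [if_pos rfl, if_neg hj]
    have := h' j hij
    omega
  · rcases eq_or_ne j v with rfl | hj
    · rw [if_neg hi, if_pos rfl]
      have := h' i (G.symm.symm _ _ hij)
      omega
    · rw [if_neg hi, if_neg hj]
      exact hb.1.2 i j hij

lemma basic_le (hk : 1 ≤ k) (hb : IsBasicCover G k a) (v : V) : a v ≤ k := by
  by_contra h
  push_neg at h
  apply basic_no_sub hb (v := v) (by omega)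
  constructor
  · intro h0
    have := congrFun h0 v
    simp [subOne] at this
    omega
  · intro i j hij
    simp only [subOne]
    rcases eq_or_ne i v with rfl | hi
    · have hj : j ≠ i := fun h2 => G.loopless.irrefl i (h2 ▸ hij)
      rw [if_pos rfl, if_neg hj]
      omega
    · rcases eq_or_ne j v with rfl | hj
      · rw [if_neg hi, if_pos rfl]
        omega
      · rw [if_neg hi, if_neg hj]
        exact hb.1.2 i j hij

lemma basic_isolated (hk : 1 ≤ k) (hxy : G.Adj x y) (hb : IsBasicCover G k a)
    (hiso : ∀ w, ¬ G.Adj v w) : a v = 0 := by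
  by_contra h
  have hv : 1 ≤ a v := Nat.pos_of_ne_zero h
  have hne : subOne a v ≠ 0 := by
    intro h0
    have hx : x ≠ v := fun h2 => hiso y (h2 ▸ hxy)
    have hy : y ≠ v := fun h2 => hiso x (h2 ▸ G.symm.symm _ _ hxy)
    have h1 := congrFun h0 x
    have h2 := congrFun h0 y
    simp only [subOne, if_neg hx, if_neg hy, Pi.zero_apply] at h1 h2
    have := hb.1.2 x y hxy
    omega
  obtain ⟨j, hj, _⟩ := basic_tight hb hv hne
  exact hiso j hj

lemma exists_basic (G : SimpleGraph V) (k : ℕ) :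
    ∀ n (a : V → ℕ), ∑ w, a w ≤ n → IsCover G k a → ∃ b, IsBasicCover G k b := by
  intro n
  induction n with
  | zero =>
    intro a hn hc
    exact absurd (funext fun w => by
      have : a w ≤ 0 := le_trans
        (Finset.single_le_sum (fun i _ => Nat.zero_le (a i)) (Finset.mem_univ w)) hn
      simpa using this) hc.1
  | succ n ih =>
    intro a hn hc
    by_cases hb : IsBasicCover G k a
    · exact ⟨a, hb⟩
    · simp only [IsBasicCover, hc, true_and, not_not] at hb
      obtain ⟨b, c, hbc, hcc, heq⟩ := hb
      refine ih b ?_ hbc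
      have h1 : ∑ w, a w = ∑ w, b w + ∑ w, c w := by
        rw [heq, ← Finset.sum_add_distrib]
        rfl
      have h2 : 1 ≤ ∑ w, c w := one_le_sum_of_ne_zero hcc.1
      omega

lemma all_tight {s t : ℕ} (u : Fin s → ℕ) (w : Fin t → ℕ)
    (hu : ∀ p, 1 ≤ u p) (hw : ∀ q, 2 ≤ w q)
    (h : ∑ p, u p + ∑ q, w q ≤ s + 2 * t) :
    (∀ p, u p = 1) ∧ (∀ q, w q = 2) := by
  have h1 : ∑ p : Fin s, (1 : ℕ) ≤ ∑ p, u p := Finset.sum_le_sum fun p _ => hu p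
  have h2 : ∑ q : Fin t, (2 : ℕ) ≤ ∑ q, w q := Finset.sum_le_sum fun q _ => hw q
  have e1 : ∑ p : Fin s, (1 : ℕ) = s := by simp
  have e2 : ∑ q : Fin t, (2 : ℕ) = 2 * t := by simp [mul_comm]
  constructor
  · intro p
    have := (Finset.sum_eq_sum_iff_of_le (fun p (_ : p ∈ Finset.univ) => hu p)).mp
      (by omega) p (Finset.mem_univ p)
    omega
  · intro q
    have := (Finset.sum_eq_sum_iff_of_le (fun q (_ : q ∈ Finset.univ) => hw q)).mp
      (by omega) q (Finset.mem_univ q)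
    omega

end AuxDomain

/-- `G` is a domain if and only if `G` has at least one edge and each
non-isolated vertex `i` has a neighbour `j` with `a i + a j = 1` for every basic `1`-cover
`a` and `b i + b j = 2` for every basic `2`-cover `b`. -/
theorem domain_iff_vertexwise [Nonempty V] (G : SimpleGraph V) :
    IsGraphDomain G ↔
      (∃ i j : V, G.Adj i j) ∧
        ∀ i : V, (∃ x, G.Adj i x) →
          ∃ j : V, G.Adj i j ∧
            (∀ a : V → ℕ, IsBasicCover G 1 a → a i + a j = 1) ∧
            (∀ b : V → ℕ, IsBasicCover G 2 b → b i + b j = 2) := by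

  classical
  constructor
  · intro hdom
    -- Step 1: G has an edge
    have hedge : ∃ i j : V, G.Adj i j := by
      by_contra hno
      push_neg at hno
      obtain ⟨v⟩ := ‹Nonempty V›
      have he : IsBasicCover G 1 (single1 v) := by
        refine ⟨⟨single1_ne_zero v, fun i j hij => absurd hij (hno i j)⟩, ?_⟩
        rintro ⟨b, c, hb, hc, heq⟩
        have hsum : ∑ w, single1 v w = 1 := by simp [single1]
        have h1 : ∑ w, single1 v w = ∑ w, b w + ∑ w, c w := by
          rw [heq, ← Finset.sum_add_distrib]; rfl
        have hb1 := one_le_sum_of_ne_zero hb.1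
        have hc1 := one_le_sum_of_ne_zero hc.1
        omega
      have hbad := hdom 2 0 (by norm_num) (fun _ => single1 v) Fin.elim0
        (fun _ => he) (fun q => q.elim0)
      apply hbad.2
      refine ⟨single1 v, single1 v,
        ⟨single1_ne_zero v, fun i j hij => absurd hij (hno i j)⟩,
        ⟨single1_ne_zero v, fun i j _ => Nat.zero_le _⟩, ?_⟩
      simp [Fin.sum_univ_two, two_mul]
    refine ⟨hedge, fun i hi => ?_⟩
    obtain ⟨x, y, hxy⟩ := hedge
    -- the sets of basic 1-covers and basic 2-covers are finite
    have hfin : ∀ k : ℕ, 1 ≤ k → {a : V → ℕ | IsBasicCover G k a}.Finite := by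
      intro k hk
      apply Set.Finite.subset (Set.Finite.pi (fun _ : V => Set.finite_Iic k))
      intro a ha
      simp only [Set.mem_pi, Set.mem_univ, Set.mem_Iic, forall_true_left]
      exact fun w => basic_le hk ha w
    have h1fin := hfin 1 le_rfl
    have h2fin := hfin 2 (by norm_num)
    set T1 := h1fin.toFinset with hT1
    set T2 := h2fin.toFinset with hT2
    set s := T1.card with hs_def
    set t := T2.card with ht_def
    -- both sets are nonempty
    obtain ⟨v0⟩ := ‹Nonempty V›
    have hcov1 : IsCover G 1 (fun _ => 1) := by
      refine ⟨fun h0 => ?_, fun i j _ => by norm_num⟩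
      have := congrFun h0 v0; simp at this
    have hcov2 : IsCover G 2 (fun _ => 2) := by
      refine ⟨fun h0 => ?_, fun i j _ => by norm_num⟩
      have := congrFun h0 v0; simp at this
    obtain ⟨b1, hb1⟩ := exists_basic G 1 (∑ _w : V, 1) (fun _ => 1) le_rfl hcov1
    obtain ⟨b2, hb2⟩ := exists_basic G 2 (∑ _w : V, 2) (fun _ => 2) le_rfl hcov2
    have hs : 1 ≤ s := Finset.card_pos.mpr ⟨b1, h1fin.mem_toFinset.mpr hb1⟩
    have ht : 1 ≤ t := Finset.card_pos.mpr ⟨b2, h2fin.mem_toFinset.mpr hb2⟩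
    -- enumerations
    set f : Fin s → V → ℕ := fun p => ((T1.equivFin.symm p : T1) : V → ℕ) with hf_def
    set g : Fin t → V → ℕ := fun q => ((T2.equivFin.symm q : T2) : V → ℕ) with hg_def
    have hf : ∀ p, IsBasicCover G 1 (f p) := fun p =>
      h1fin.mem_toFinset.mp (T1.equivFin.symm p).2
    have hg : ∀ q, IsBasicCover G 2 (g q) := fun q =>
      h2fin.mem_toFinset.mp (T2.equivFin.symm q).2
    have hfsurj : ∀ a, IsBasicCover G 1 a → ∃ p, f p = a := fun a ha =>
      ⟨T1.equivFin ⟨a, h1fin.mem_toFinset.mpr ha⟩, by simp [hf_def]⟩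
    have hgsurj : ∀ b, IsBasicCover G 2 b → ∃ q, g q = b := fun b hb =>
      ⟨T2.equivFin ⟨b, h2fin.mem_toFinset.mpr hb⟩, by simp [hg_def]⟩
    have hH := hdom s t (by omega) f g hf hg
    set H := (∑ p, f p) + (∑ q, g q) with hH_def
    have hHw : ∀ w, H w = ∑ p, f p w + ∑ q, g q w := by
      intro w
      simp [hH_def, Finset.sum_apply]
    by_cases hHi : H i = 0
    · -- all basic covers vanish at i; any neighbour works
      obtain ⟨j0, hj0⟩ := hi
      have hfz : ∀ p, f p i = 0 := by
        intro p
        have := hHw i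
        have h1 : ∑ p, f p i = 0 := by omega
        exact (Finset.sum_eq_zero_iff.mp h1) p (Finset.mem_univ p)
      have hgz : ∀ q, g q i = 0 := by
        intro q
        have := hHw i
        have h1 : ∑ q, g q i = 0 := by omega
        exact (Finset.sum_eq_zero_iff.mp h1) q (Finset.mem_univ q)
      refine ⟨j0, hj0, ?_, ?_⟩
      · intro a ha
        obtain ⟨p, rfl⟩ := hfsurj a ha
        have h1 := (hf p).1.2 i j0 hj0
        have h2 := basic_le le_rfl (hf p) j0
        have := hfz p
        omega
      · intro b hb
        obtain ⟨q, rfl⟩ := hgsurj b hb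
        have h1 := (hg q).1.2 i j0 hj0
        have h2 := basic_le (by norm_num) (hg q) j0
        have := hgz q
        omega
    · -- H i ≥ 1; use basicness of H at i
      have hHi1 : 1 ≤ H i := Nat.pos_of_ne_zero hHi
      have hne : subOne H i ≠ 0 := by
        intro h0
        have hall : ∀ w, w ≠ i → H w = 0 := by
          intro w hwne
          have := congrFun h0 w
          simpa [subOne, hwne] using this
        have hi1 : H i ≤ 1 := by
          have := congrFun h0 i
          simp [subOne] at this
          omega
        have hcxy := hH.1.2 x y hxy
        have hxyne : x ≠ y := G.ne_of_adj hxy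
        have hxy1 : H x + H y ≤ 1 := by
          rcases eq_or_ne x i with hxi | hxi
          · have hy0 : H y = 0 := hall y (by rw [← hxi]; exact hxyne.symm)
            have hx1 : H x ≤ 1 := by rw [hxi]; exact hi1
            omega
          · have hx0 : H x = 0 := hall x hxi
            rcases eq_or_ne y i with hyi | hyi
            · have hy1 : H y ≤ 1 := by rw [hyi]; exact hi1
              omega
            · have hy0 : H y = 0 := hall y hyi
              omega
        omega
      obtain ⟨j, hij, hle⟩ := basic_tight hH hHi1 hne
      have hge := hH.1.2 i j hij
      have hsum : ∑ p, (f p i + f p j) + ∑ q, (g q i + g q j) ≤ s + 2 * t := by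
        rw [Finset.sum_add_distrib, Finset.sum_add_distrib]
        have e1 := hHw i
        have e2 := hHw j
        omega
      obtain ⟨hf1, hg2⟩ := all_tight _ _
        (fun p => (hf p).1.2 i j hij) (fun q => (hg q).1.2 i j hij) hsum
      refine ⟨j, hij, ?_, ?_⟩
      · intro a ha
        obtain ⟨p, rfl⟩ := hfsurj a ha
        exact hf1 p
      · intro b hb
        obtain ⟨q, rfl⟩ := hgsurj b hb
        exact hg2 q
  · rintro ⟨⟨x, y, hxy⟩, hvert⟩
    intro s t hst f g hf hg
    set H := (∑ p, f p) + (∑ q, g q) with hH_def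
    have hHw : ∀ w, H w = ∑ p, f p w + ∑ q, g q w := by
      intro w
      simp [hH_def, Finset.sum_apply]
    have hHne : H ≠ 0 := by
      intro h0
      rcases Nat.eq_zero_or_pos s with hs | hs
      swap
      · obtain ⟨w, hw⟩ := Function.ne_iff.mp (hf ⟨0, hs⟩).1.1
        have h1 : f ⟨0, hs⟩ w ≤ ∑ p, f p w :=
          Finset.single_le_sum (f := fun p => f p w) (fun p _ => Nat.zero_le _)
            (Finset.mem_univ _)
        have h2 := congrFun h0 w
        rw [hHw w] at h2
        simp only [Pi.zero_apply] at h2 hw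
        omega
      · have hts : 1 ≤ t := by omega
        obtain ⟨w, hw⟩ := Function.ne_iff.mp (hg ⟨0, hts⟩).1.1
        have h1 : g ⟨0, hts⟩ w ≤ ∑ q, g q w :=
          Finset.single_le_sum (f := fun q => g q w) (fun q _ => Nat.zero_le _)
            (Finset.mem_univ _)
        have h2 := congrFun h0 w
        rw [hHw w] at h2
        simp only [Pi.zero_apply] at h2 hw
        omega
    have hHcov : IsCover G (s + 2 * t) H := by
      refine ⟨hHne, fun i j hij => ?_⟩
      rw [hHw i, hHw j]
      have h1 : ∑ p : Fin s, (1 : ℕ) ≤ ∑ p, (f p i + f p j) :=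
        Finset.sum_le_sum fun p _ => (hf p).1.2 i j hij
      have h2 : ∑ q : Fin t, (2 : ℕ) ≤ ∑ q, (g q i + g q j) :=
        Finset.sum_le_sum fun q _ => (hg q).1.2 i j hij
      rw [Finset.sum_add_distrib] at h1 h2
      simp only [Finset.sum_const, Finset.card_univ, Fintype.card_fin, smul_eq_mul,
        mul_one] at h1 h2
      omega
    refine ⟨hHcov, ?_⟩
    rintro ⟨b, c, hb, hc, heq⟩
    obtain ⟨v, hv⟩ := Function.ne_iff.mp hc.1
    simp only [Pi.zero_apply] at hv
    have hbcv : H v = b v + c v := by rw [heq]; rfl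
    have hHv : 1 ≤ H v := by omega
    have hvni : ∃ w, G.Adj v w := by
      by_contra hiso
      push_neg at hiso
      have hz : H v = 0 := by
        rw [hHw v]
        rw [Finset.sum_eq_zero fun p _ => basic_isolated le_rfl hxy (hf p) hiso,
          Finset.sum_eq_zero fun q _ => basic_isolated (by norm_num) hxy (hg q) hiso]
        omega
      omega
    obtain ⟨j, hvj, h1, h2⟩ := hvert v hvni
    have hHvj : H v + H j = s + 2 * t := by
      rw [hHw v, hHw j]
      have e1 : ∑ p, f p v + ∑ p, f p j = ∑ p, (f p v + f p j) := by
        rw [Finset.sum_add_distrib]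
      have e2 : ∑ q, g q v + ∑ q, g q j = ∑ q, (g q v + g q j) := by
        rw [Finset.sum_add_distrib]
      have e3 : ∑ p, (f p v + f p j) = s := by
        rw [Finset.sum_congr rfl fun p _ => h1 (f p) (hf p)]
        simp
      have e4 : ∑ q, (g q v + g q j) = 2 * t := by
        rw [Finset.sum_congr rfl fun q _ => h2 (g q) (hg q)]
        simp [mul_comm]
      omega
    have hbvj := hb.2 v j hvj
    have hbcj : H j = b j + c j := by rw [heq]; rfl
    omega
end

section
/- Let G be a connected finite simple graph. Then G satisfies SC if and only if G is either a single vertex or a complete bipartite graph K_{a,b} for some integers b ≥ a ≥ 1 (i.e., the vertex set of G can be partitioned into two nonempty parts A and B such that the edges of G are exactly the pairs {x,y} with x ∈ A and y ∈ B). -/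
variable {V : Type*} [Fintype V] [DecidableEq V]

/-- A connected graph `G` satisfies SC if and only if `G` is a single vertex or
a complete bipartite graph `K_{a,b}` with `b ≥ a ≥ 1` (i.e. the vertices can be partitioned
into two nonempty parts `A` and `B` such that the edges of `G` are exactly the pairs
`{x, y}` with `x ∈ A` and `y ∈ B`). -/
theorem sc_iff_point_or_complete_bipartite (G : SimpleGraph V) (hconn : G.Connected) :
    SatisfiesSC G ↔
      (Fintype.card V = 1 ∨
        ∃ A B : Set V, A.Nonempty ∧ B.Nonempty ∧ A ∪ B = Set.univ ∧ Disjoint A B ∧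
          ∀ x y : V, G.Adj x y ↔ (x ∈ A ∧ y ∈ B) ∨ (x ∈ B ∧ y ∈ A)) := by
  constructor
  · intro hsc
    by_cases hcard : Fintype.card V = 1
    · exact Or.inl hcard
    right
    have hne : Nonempty V := hconn.nonempty
    have h2 : 1 < Fintype.card V := by
      have := Fintype.card_pos_iff.mpr hne
      omega
    obtain ⟨x, y, hxy⟩ := Fintype.exists_pair_of_one_lt_card h2
    obtain ⟨u, v, huv⟩ : ∃ u v, G.Adj u v := by
      obtain ⟨w⟩ := hconn.preconnected x y
      cases w with
      | nil => exact (hxy rfl).elim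
      | cons h p => exact ⟨_, _, h⟩
    set A : Set V := {z | G.Adj u z} with hA
    set B : Set V := {z | G.Adj v z} with hB
    have key : ∀ z, z ∈ A ∪ B := by
      intro z
      obtain ⟨w⟩ := hconn.preconnected u z
      have step : ∀ {a b : V} (p : G.Walk a b), a ∈ A ∪ B → b ∈ A ∪ B := by
        intro a b p
        induction p with
        | nil => exact id
        | cons h p ih =>
          intro ha
          apply ih
          rcases ha with ha | ha
          · exact Or.inr ((hsc u _ v _ ha huv h).2)
          · exact Or.inl ((hsc v _ u _ ha huv.symm h).2)
      exact step w (Or.inr huv.symm)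
    have hdisj : Disjoint A B := by
      rw [Set.disjoint_left]
      intro z hzA hzB
      exact ((hsc u v z z huv hzA hzB).1 rfl).elim
    refine ⟨A, B, ⟨v, huv⟩, ⟨u, huv.symm⟩, ?_, hdisj, ?_⟩
    · ext z; simpa using key z
    · intro p q
      constructor
      · intro hpq
        rcases key p with hp | hp
        · exact Or.inl ⟨hp, (hsc u p v q hp huv hpq).2⟩
        · exact Or.inr ⟨hp, (hsc v p u q hp huv.symm hpq).2⟩
      · rintro (⟨hp, hq⟩ | ⟨hp, hq⟩)
        · exact (hsc u v p q huv hp hq).2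
        · exact ((hsc u v q p huv hq hp).2).symm
  · rintro (hcard | ⟨A, B, hAne, hBne, hunion, hdisj, hadj⟩)
    · intro i j i' j' hij _ _
      have : i = j := Fintype.card_le_one_iff.mp (le_of_eq hcard) i j
      exact (hij.ne this).elim
    · intro i j i' j' hij hii' hjj'
      have hd := Set.disjoint_left.mp hdisj
      rcases (hadj i j).mp hij with ⟨hiA, hjB⟩ | ⟨hiB, hjA⟩
      · have hi'B : i' ∈ B := by
          rcases (hadj i i').mp hii' with ⟨_, h⟩ | ⟨h, _⟩
          · exact h
          · exact (hd hiA h).elim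
        have hj'A : j' ∈ A := by
          rcases (hadj j j').mp hjj' with ⟨h, _⟩ | ⟨_, h⟩
          · exact (hd h hjB).elim
          · exact h
        refine ⟨fun h => hd hj'A (h ▸ hi'B), (hadj i' j').mpr (Or.inr ⟨hi'B, hj'A⟩)⟩
      · have hi'A : i' ∈ A := by
          rcases (hadj i i').mp hii' with ⟨h, _⟩ | ⟨_, h⟩
          · exact (hd h hiB).elim
          · exact h
        have hj'B : j' ∈ B := by
          rcases (hadj j j').mp hjj' with ⟨_, h⟩ | ⟨h, _⟩
          · exact h
          · exact (hd hjA h).elim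
        refine ⟨fun h => hd hi'A (h ▸ hj'B), (hadj i' j').mpr (Or.inl ⟨hi'A, hj'B⟩)⟩
end

section
/- Let G be a finite simple graph with at least one edge. Then the graph G^{0-1} satisfies SC. -/
variable {V : Type*} [Fintype V] [DecidableEq V]

lemma exists_basic_le (G : SimpleGraph V) :
    ∀ n (a : V → ℕ), ∑ v, a v = n → IsCover G 1 a →
      ∃ b, IsBasicCover G 1 b ∧ ∀ v, b v ≤ a v := by
  intro n
  induction n using Nat.strong_induction_on with
  | _ n ih =>
    intro a hn ha
    by_cases hbasic : IsBasicCover G 1 a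
    · exact ⟨a, hbasic, fun v => le_refl _⟩
    · have hdec : ∃ b c : V → ℕ, IsCover G 1 b ∧ IsCover G 0 c ∧ a = b + c := by
        by_contra hcon; exact hbasic ⟨ha, hcon⟩
      obtain ⟨b, c, hb, hc, habc⟩ := hdec
      have hc0 : ∃ v, 0 < c v := by
        by_contra hcon
        push_neg at hcon
        exact hc.1 (funext fun v => Nat.le_zero.mp (hcon v))
      obtain ⟨v0, hv0⟩ := hc0
      have hsum : ∑ v, a v = ∑ v, b v + ∑ v, c v := by
        rw [habc, ← Finset.sum_add_distrib]; rfl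
      have hcpos : 0 < ∑ v, c v :=
        lt_of_lt_of_le hv0 (Finset.single_le_sum (fun v _ => Nat.zero_le _)
          (Finset.mem_univ v0))
      have hlt : ∑ v, b v < n := by omega
      obtain ⟨d, hd, hle⟩ := ih _ hlt b rfl hb
      refine ⟨d, hd, fun v => (hle v).trans ?_⟩
      rw [habc]; exact Nat.le_add_right _ _

/-- If `G` has at least one edge, then the graph `G^{0-1}` satisfies SC. -/
theorem zeroOne_satisfies_sc (G : SimpleGraph V) (h : ∃ i j : V, G.Adj i j) :
    SatisfiesSC (ZeroOne G) := by
  obtain ⟨i0, j0, hE⟩ := h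
  intro i j i' j' hij hii' hjj'
  obtain ⟨hGij, hcij⟩ := hij
  obtain ⟨hGii', hcii'⟩ := hii'
  obtain ⟨hGjj', hcjj'⟩ := hjj'
  -- every basic 1-cover b satisfies b i' + b j' = 1
  have key : ∀ b : V → ℕ, IsBasicCover G 1 b → b i' + b j' = 1 := by
    intro b hb
    have h1 := hcij b hb
    have h2 := hcii' b hb
    have h3 := hcjj' b hb
    omega
  -- there exists a basic 1-cover
  have hone : IsCover G 1 (fun _ => 1) := by
    constructor
    · intro hcon
      have := congrFun hcon i
      simp at this
    · intro u v _; simp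
  obtain ⟨b0, hb0, _⟩ := exists_basic_le G _ _ rfl hone
  have hne : i' ≠ j' := by
    intro heq
    have := key b0 hb0
    rw [heq] at this
    omega
  refine ⟨hne, ?_, key⟩
  -- show G.Adj i' j'
  by_cases h1 : i' = j
  · subst h1; exact hGjj'
  by_cases h2 : j' = i
  · subst h2; exact hGii'.symm
  by_contra hnot
  set a : V → ℕ := fun v => if v = i' ∨ v = j' then 0 else 1 with ha
  have hia : a i = 1 := by
    simp only [ha]
    rw [if_neg]
    push_neg
    exact ⟨fun hc => G.irrefl (hc ▸ hGii'), fun hc => h2 hc.symm⟩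
  have hcov : IsCover G 1 a := by
    constructor
    · intro hcon
      have := congrFun hcon i
      rw [hia] at this
      simp at this
    · intro u v huv
      simp only [ha]
      by_cases hu : u = i' ∨ u = j' <;> by_cases hv : v = i' ∨ v = j' <;>
        simp [hu, hv]
      rcases hu with hu | hu <;> rcases hv with hv | hv <;> subst hu <;> subst hv
      · exact G.irrefl huv
      · exact hnot huv
      · exact hnot huv.symm
      · exact G.irrefl huv
  obtain ⟨b, hb, hle⟩ := exists_basic_le G _ _ rfl hcov
  have hbi' : b i' = 0 := by
    have := hle i'
    simp only [ha] at this
    simpa using this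
  have hbj' : b j' = 0 := by
    have := hle j'
    simp only [ha] at this
    simpa using this
  have := key b hb
  omega
end

section
/- Let G be a finite simple graph with at least one edge. Then G is a domain if and only if the graph G^{0-1} has no isolated vertices (i.e., every vertex of G^{0-1} lies on an edge of G^{0-1}). -/
variable {V : Type*} [Fintype V] [DecidableEq V]

section Aux

lemma zeroOne_adj (G : SimpleGraph V) {i j : V} :
    (ZeroOne G).Adj i j ↔
      G.Adj i j ∧ ∀ a : V → ℕ, IsBasicCover G 1 a → a i + a j = 1 :=
  Iff.rfl

/-- A finset of vertices is a (vertex) cover if it meets every edge. -/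
def IsCov (G : SimpleGraph V) (T : Finset V) : Prop :=
  ∀ ⦃i j : V⦄, G.Adj i j → i ∈ T ∨ j ∈ T

lemma exists_min_cover (G : SimpleGraph V) (S : Finset V) (hS : IsCov G S) :
    ∃ T ⊆ S, IsCov G T ∧ ∀ v ∈ T, ∃ x, G.Adj v x ∧ x ∉ T := by
  classical
  revert hS
  induction S using Finset.strongInductionOn with
  | _ S ih =>
    intro hS
    by_cases hmin : ∀ v ∈ S, ∃ x, G.Adj v x ∧ x ∉ S
    · exact ⟨S, Finset.Subset.refl S, hS, hmin⟩
    · push_neg at hmin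
      obtain ⟨v, hvS, hvall⟩ := hmin
      have hS' : IsCov G (S.erase v) := by
        intro i j hij
        rcases hS hij with hi | hj
        · by_cases hiv : i = v
          · subst hiv
            right
            exact Finset.mem_erase.mpr
              ⟨fun hjv => G.irrefl (v := i) (hjv ▸ hij), hvall j hij⟩
          · left; exact Finset.mem_erase.mpr ⟨hiv, hi⟩
        · by_cases hjv : j = v
          · subst hjv
            left
            exact Finset.mem_erase.mpr
              ⟨fun hiv => G.irrefl (v := j) (hiv ▸ hij.symm), hvall i hij.symm⟩
          · right; exact Finset.mem_erase.mpr ⟨hjv, hj⟩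
      obtain ⟨T, hTsub, h1, h2⟩ := ih (S.erase v) (Finset.erase_ssubset hvS) hS'
      exact ⟨T, hTsub.trans (Finset.erase_subset _ _), h1, h2⟩

/-- The characteristic function of a finset. -/
def chi (T : Finset V) : V → ℕ := fun v => if v ∈ T then 1 else 0

lemma chi_basic (G : SimpleGraph V) (hedge : ∃ i j : V, G.Adj i j) (T : Finset V)
    (hcov : IsCov G T) (hmin : ∀ v ∈ T, ∃ x, G.Adj v x ∧ x ∉ T) :
    IsBasicCover G 1 (chi T) := by
  classical
  constructor
  · constructor
    · -- chi T ≠ 0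
      obtain ⟨i, j, hij⟩ := hedge
      have hv : ∃ v, v ∈ T := by
        rcases hcov hij with hh | hh
        exacts [⟨i, hh⟩, ⟨j, hh⟩]
      obtain ⟨v, hv⟩ := hv
      intro h0
      have := congrFun h0 v
      simp [chi, hv] at this
    · intro i j hij
      have : 1 ≤ chi T i ∨ 1 ≤ chi T j := by
        rcases hcov hij with hh | hh
        exacts [Or.inl (by simp [chi, hh]), Or.inr (by simp [chi, hh])]
      omega
  · rintro ⟨b, c, ⟨hb0, hbcov⟩, ⟨hc0, -⟩, heq⟩
    obtain ⟨v, hv⟩ := Function.ne_iff.mp hc0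
    simp only [Pi.zero_apply] at hv
    have hev := congrFun heq v
    simp only [Pi.add_apply] at hev
    have hvT : v ∈ T := by
      by_contra hh
      simp [chi, hh] at hev
      omega
    obtain ⟨x, hvx, hxT⟩ := hmin v hvT
    have hex := congrFun heq x
    simp only [Pi.add_apply] at hex
    have h1 := hbcov v x hvx
    simp [chi, hvT] at hev
    simp [chi, hxT] at hex
    omega

lemma basic_tight_s7 (G : SimpleGraph V) (hedge : ∃ i j : V, G.Adj i j) {k : ℕ}
    (hk : 1 ≤ k) {a : V → ℕ} (ha : IsBasicCover G k a) {v : V} (hv : 0 < a v) :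
    ∃ x, G.Adj v x ∧ a v + a x = k := by
  classical
  by_contra hcon
  push_neg at hcon
  have hcon' : ∀ x, G.Adj v x → k + 1 ≤ a v + a x := by
    intro x hx
    have h1 := ha.1.2 v x hx
    have h2 := hcon x hx
    omega
  set E : V → ℕ := fun u => if u = v then 1 else 0 with hE
  set b : V → ℕ := fun u => a u - E u with hb
  have hab : a = b + E := by
    funext u
    simp only [hb, hE, Pi.add_apply]
    by_cases hu : u = v
    · subst hu; simp; omega
    · simp [hu]
  apply ha.2
  refine ⟨b, E, ⟨?_, ?_⟩, ⟨?_, fun _ _ _ => Nat.zero_le _⟩, hab⟩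
  · -- b ≠ 0
    by_cases hiso : ∃ x, G.Adj v x
    · obtain ⟨x, hx⟩ := hiso
      have h1 := hcon' x hx
      have hxv : x ≠ v := fun hh => G.irrefl (v := v) (hh ▸ hx)
      intro h0
      have h2 := congrFun h0 x
      have h3 := congrFun h0 v
      simp [hb, hE, hxv] at h2 h3
      omega
    · push_neg at hiso
      obtain ⟨i, j, hij⟩ := hedge
      have hi : i ≠ v := fun hh => hiso j (hh ▸ hij)
      have hj : j ≠ v := fun hh => hiso i (hh ▸ hij.symm)
      have hc := ha.1.2 i j hij
      intro h0
      have h2 := congrFun h0 i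
      have h3 := congrFun h0 j
      simp [hb, hE, hi, hj] at h2 h3
      omega
  · -- b is a k-cover on edges
    intro i j hij
    have hc := ha.1.2 i j hij
    by_cases hi : i = v
    · subst hi
      have h1 := hcon' j hij
      have hj : j ≠ i := (G.ne_of_adj hij).symm
      simp [hb, hE, hj]
      omega
    · by_cases hj : j = v
      · subst hj
        have h1 := hcon' i hij.symm
        simp [hb, hE, hi]
        omega
      · simp [hb, hE, hi, hj]
        omega
  · -- E ≠ 0
    intro h0
    have := congrFun h0 v
    simp [hE] at this

lemma zeroOne_two_cover (G : SimpleGraph V) (hedge : ∃ i j : V, G.Adj i j) {v j : V}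
    (hzo : (ZeroOne G).Adj v j) {g : V → ℕ} (hg : IsBasicCover G 2 g) :
    g v + g j = 2 := by
  classical
  have hadj : G.Adj v j := hzo.1
  have hge : 2 ≤ g v + g j := hg.1.2 v j hadj
  by_contra hne
  have h3 : 3 ≤ g v + g j := by omega
  have hvpos : 0 < g v := by
    by_contra h0
    obtain ⟨w, hw, heqw⟩ := basic_tight_s7 G hedge (by norm_num) hg (v := j) (by omega)
    omega
  have hjpos : 0 < g j := by
    by_contra h0
    obtain ⟨w, hw, heqw⟩ := basic_tight_s7 G hedge (by norm_num) hg (v := v) (by omega)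
    omega
  obtain ⟨u, hvu, hequ⟩ := basic_tight_s7 G hedge (by norm_num) hg hvpos
  obtain ⟨w, hjw, heqw⟩ := basic_tight_s7 G hedge (by norm_num) hg hjpos
  have huw : g u + g w ≤ 1 := by omega
  set S : Finset V := Finset.univ \ {u, w} with hS
  have hScov : IsCov G S := by
    intro i₁ j₁ hij
    by_contra hcc
    push_neg at hcc
    obtain ⟨h1, h2⟩ := hcc
    simp only [hS, Finset.mem_sdiff, Finset.mem_univ, Finset.mem_insert,
      Finset.mem_singleton, true_and, not_not] at h1 h2
    have hcov2 := hg.1.2 i₁ j₁ hij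
    have hne' := G.ne_of_adj hij
    rcases h1 with rfl | rfl <;> rcases h2 with rfl | rfl
    · exact hne' rfl
    · omega
    · omega
    · exact hne' rfl
  obtain ⟨T, hTsub, hTcov, hTmin⟩ := exists_min_cover G S hScov
  have huT : u ∉ T := fun hh => by
    have := hTsub hh
    simp [hS] at this
  have hwT : w ∉ T := fun hh => by
    have := hTsub hh
    simp [hS] at this
  have hvT : v ∈ T := (hTcov hvu).resolve_right huT
  have hjT : j ∈ T := (hTcov hjw).resolve_right hwT
  have hbasic := chi_basic G hedge T hTcov hTmin
  have hone := hzo.2 _ hbasic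
  simp [chi, hvT, hjT] at hone

end Aux

/-- If `G` has at least one edge, then `G` is a domain if and only if
`G^{0-1}` has no isolated vertices, i.e. every vertex of `G^{0-1}` (that is, every
non-isolated vertex of `G`) lies on an edge of `G^{0-1}`. -/
theorem domain_iff_zeroOne_no_isolated (G : SimpleGraph V) (h : ∃ i j : V, G.Adj i j) :
    IsGraphDomain G ↔ ∀ i : V, (∃ x, G.Adj i x) → ∃ j : V, (ZeroOne G).Adj i j := by
  classical
  constructor
  · -- domain → no isolated vertices in G^{0-1}
    intro hdom i hxex
    obtain ⟨x, hix⟩ := hxex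
    by_contra hno
    push_neg at hno
    -- for each neighbour jj of i, find a basic 1-cover with value 1 at both i and jj
    have hA : ∀ jj : V, ∃ a : V → ℕ, G.Adj i jj →
        IsBasicCover G 1 a ∧ a i = 1 ∧ a jj = 1 := by
      intro jj
      by_cases hij : G.Adj i jj
      · have hex : ∃ a, IsBasicCover G 1 a ∧ a i + a jj ≠ 1 := by
          by_contra hcc
          push_neg at hcc
          exact hno jj ((zeroOne_adj G).mpr ⟨hij, fun a ha => hcc a ha⟩)
        obtain ⟨a, ha, hne⟩ := hex
        have h1 : 1 ≤ a i + a jj := ha.1.2 i jj hij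
        have hii : a i ≤ 1 := by
          by_cases hp : 0 < a i
          · obtain ⟨y, hy, he⟩ := basic_tight_s7 G h le_rfl ha hp; omega
          · omega
        have hjj : a jj ≤ 1 := by
          by_cases hp : 0 < a jj
          · obtain ⟨y, hy, he⟩ := basic_tight_s7 G h le_rfl ha hp; omega
          · omega
        exact ⟨a, fun _ => ⟨ha, by omega, by omega⟩⟩
      · exact ⟨0, fun hc => absurd hc hij⟩
    choose A hAprop using hA
    -- a minimal cover avoiding i
    have hcov0 : IsCov G (Finset.univ.erase i) := by
      intro p q hpq
      by_cases hp : p = i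
      · subst hp
        right
        exact Finset.mem_erase.mpr ⟨(G.ne_of_adj hpq).symm, Finset.mem_univ q⟩
      · left; exact Finset.mem_erase.mpr ⟨hp, Finset.mem_univ p⟩
    obtain ⟨T, hTsub, hTcov, hTmin⟩ := exists_min_cover G _ hcov0
    have hiT : i ∉ T := fun hm => (Finset.mem_erase.mp (hTsub hm)).1 rfl
    have hchib := chi_basic G h T hTcov hTmin
    set d := (G.neighborFinset i).card with hd
    have hdpos : 0 < d := by
      rw [hd, Finset.card_pos]
      exact ⟨x, (G.mem_neighborFinset i x).mpr hix⟩
    set e := (G.neighborFinset i).equivFin with hee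
    set f : Fin (d + 1) → V → ℕ :=
      Fin.cons (chi T) (fun p => A (e.symm p).1) with hf
    have hfbasic : ∀ p : Fin (d + 1), IsBasicCover G 1 (f p) := by
      intro p
      refine Fin.cases ?_ ?_ p
      · rw [hf, Fin.cons_zero]; exact hchib
      · intro p'
        rw [hf, Fin.cons_succ]
        exact (hAprop _ ((G.mem_neighborFinset i _).mp (e.symm p').2)).1
    have key : IsBasicCover G (d + 1 + 2 * 0)
        ((∑ p, f p) + (∑ q : Fin 0, (fun _ : Fin 0 => (0 : V → ℕ)) q)) :=
      hdom (d + 1) 0 (by omega) f _ hfbasic (fun q => q.elim0)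
    have hH0 : (∑ q : Fin 0, (fun _ : Fin 0 => (0 : V → ℕ)) q) = 0 := by simp
    rw [hH0, add_zero] at key
    set c : V → ℕ := ∑ p, f p with hcdef
    -- value at i
    have hci : c i = d := by
      rw [hcdef, Finset.sum_apply, Fin.sum_univ_succ]
      simp only [hf, Fin.cons_zero, Fin.cons_succ]
      have h1 : chi T i = 0 := by simp [chi, hiT]
      have h2 : ∀ p : Fin d, A (e.symm p).1 i = 1 := fun p =>
        (hAprop _ ((G.mem_neighborFinset i _).mp (e.symm p).2)).2.1
      rw [h1, Finset.sum_congr rfl (fun p _ => h2 p)]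
      simp [hd]
    -- value at neighbours of i
    have hcq : ∀ q : V, G.Adj i q → 2 ≤ c q := by
      intro q hiq
      have hqT : q ∈ T := (hTcov hiq).resolve_left hiT
      have hqmem : q ∈ G.neighborFinset i := (G.mem_neighborFinset i q).mpr hiq
      rw [hcdef, Finset.sum_apply, Fin.sum_univ_succ]
      simp only [hf, Fin.cons_zero, Fin.cons_succ]
      have h1 : chi T q = 1 := by simp [chi, hqT]
      have hterm : A (e.symm (e ⟨q, hqmem⟩)).1 q = 1 := by
        rw [Equiv.symm_apply_apply]
        exact (hAprop q hiq).2.2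
      have h2 : (1 : ℕ) ≤ ∑ p : Fin d, A (e.symm p).1 q := by
        calc (1 : ℕ) = A (e.symm (e ⟨q, hqmem⟩)).1 q := hterm.symm
          _ ≤ ∑ p : Fin d, A (e.symm p).1 q :=
            Finset.single_le_sum (f := fun p : Fin d => A (e.symm p).1 q)
              (fun p _ => Nat.zero_le _) (Finset.mem_univ _)
      omega
    -- contradiction: c is not basic
    apply key.2
    set E : V → ℕ := fun u => if u = i then 1 else 0 with hE
    set B : V → ℕ := fun u => c u - E u with hB
    refine ⟨B, E, ⟨?_, ?_⟩, ⟨?_, fun _ _ _ => Nat.zero_le _⟩, ?_⟩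
    · -- B ≠ 0
      intro h0
      have hxi : x ≠ i := fun hh => G.irrefl (v := i) (hh ▸ hix)
      have h2 := congrFun h0 x
      have hcx := hcq x hix
      simp [hB, hE, hxi] at h2
      omega
    · -- B is a (d+1)-cover on edges
      intro p q hpq
      have hcov := key.1.2 p q hpq
      by_cases hp : p = i
      · subst hp
        have hq : q ≠ p := (G.ne_of_adj hpq).symm
        have hcq' := hcq q hpq
        simp [hB, hE, hq]
        omega
      · by_cases hq : q = i
        · subst hq
          have hcp := hcq p hpq.symm
          simp [hB, hE, hp]
          omega
        · simp [hB, hE, hp, hq]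
          omega
    · -- E ≠ 0
      intro h0
      have := congrFun h0 i
      simp [hE] at this
    · funext u
      by_cases hu : u = i
      · subst hu
        simp [hB, hE, Pi.add_apply]
        omega
      · simp [hB, hE, Pi.add_apply, hu]
  · -- no isolated vertices in G^{0-1} → domain
    intro hiso s t hst f g hf hg
    set H : V → ℕ := (∑ p, f p) + (∑ q, g q) with hH
    have hHapp : ∀ u, H u = (∑ p, f p u) + (∑ q, g q u) := by
      intro u
      rw [hH]
      simp [Finset.sum_apply]
    have hHcover : IsCover G (s + 2 * t) H := by
      constructor
      · intro h0
        have hst' : 0 < s ∨ 0 < t := by omega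
        rcases hst' with hs | ht
        · obtain ⟨v, hv⟩ := Function.ne_iff.mp (hf ⟨0, hs⟩).1.1
          simp only [Pi.zero_apply] at hv
          have h1 : f ⟨0, hs⟩ v ≤ ∑ p, f p v :=
            Finset.single_le_sum (f := fun p : Fin s => f p v)
              (fun _ _ => Nat.zero_le _) (Finset.mem_univ _)
          have h2 := congrFun h0 v
          simp only [Pi.zero_apply] at h2
          have h3 := hHapp v
          omega
        · obtain ⟨v, hv⟩ := Function.ne_iff.mp (hg ⟨0, ht⟩).1.1
          simp only [Pi.zero_apply] at hv
          have h1 : g ⟨0, ht⟩ v ≤ ∑ q, g q v :=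
            Finset.single_le_sum (f := fun q : Fin t => g q v)
              (fun _ _ => Nat.zero_le _) (Finset.mem_univ _)
          have h2 := congrFun h0 v
          simp only [Pi.zero_apply] at h2
          have h3 := hHapp v
          omega
      · intro i j hij
        have hs1 : (s : ℕ) ≤ ∑ p, (f p i + f p j) := by
          calc (s : ℕ) = ∑ _p : Fin s, 1 := by simp
            _ ≤ _ := Finset.sum_le_sum (fun p _ => (hf p).1.2 i j hij)
        have hs2 : 2 * t ≤ ∑ q, (g q i + g q j) := by
          calc 2 * t = ∑ _q : Fin t, 2 := by simp [mul_comm]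
            _ ≤ _ := Finset.sum_le_sum (fun q _ => (hg q).1.2 i j hij)
        have e1 : ∑ p, (f p i + f p j) = (∑ p, f p i) + (∑ p, f p j) :=
          Finset.sum_add_distrib
        have e2 : ∑ q, (g q i + g q j) = (∑ q, g q i) + (∑ q, g q j) :=
          Finset.sum_add_distrib
        have h3 := hHapp i
        have h4 := hHapp j
        omega
    refine ⟨hHcover, ?_⟩
    rintro ⟨b, c, hb, hc, heq⟩
    obtain ⟨v, hv⟩ := Function.ne_iff.mp hc.1
    simp only [Pi.zero_apply] at hv
    have hvc : 0 < c v := Nat.pos_of_ne_zero hv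
    have heqv := congrFun heq v
    simp only [Pi.add_apply] at heqv
    -- v is not isolated
    have hniso : ∃ y, G.Adj v y := by
      have h0 : (∑ p, f p v) + (∑ q, g q v) ≠ 0 := by
        rw [← hHapp v]
        omega
      have hone : (∃ p, f p v ≠ 0) ∨ (∃ q, g q v ≠ 0) := by
        by_contra hcc
        push_neg at hcc
        obtain ⟨hc1, hc2⟩ := hcc
        have e1 : ∑ p, f p v = 0 := Finset.sum_eq_zero (fun p _ => hc1 p)
        have e2 : ∑ q, g q v = 0 := Finset.sum_eq_zero (fun q _ => hc2 q)
        omega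
      rcases hone with ⟨p, hp⟩ | ⟨q, hq⟩
      · obtain ⟨y, hy, -⟩ := basic_tight_s7 G h le_rfl (hf p) (Nat.pos_of_ne_zero hp)
        exact ⟨y, hy⟩
      · obtain ⟨y, hy, -⟩ := basic_tight_s7 G h (by norm_num) (hg q) (Nat.pos_of_ne_zero hq)
        exact ⟨y, hy⟩
    obtain ⟨j, hzo⟩ := hiso v hniso
    have hf1 : ∀ p, f p v + f p j = 1 := fun p => hzo.2 (f p) (hf p)
    have hg2 : ∀ q, g q v + g q j = 2 := fun q => zeroOne_two_cover G h hzo (hg q)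
    have hHsum : H v + H j = s + 2 * t := by
      rw [hHapp v, hHapp j]
      have e1 : (∑ p, f p v) + (∑ p, f p j) = ∑ p, (f p v + f p j) :=
        Finset.sum_add_distrib.symm
      have e2 : (∑ q, g q v) + (∑ q, g q j) = ∑ q, (g q v + g q j) :=
        Finset.sum_add_distrib.symm
      have e3 : ∑ p, (f p v + f p j) = s := by
        rw [Finset.sum_congr rfl (fun p _ => hf1 p)]
        simp
      have e4 : ∑ q, (g q v + g q j) = 2 * t := by
        rw [Finset.sum_congr rfl (fun q _ => hg2 q)]
        simp [mul_comm]
      omega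
    have hbcov := hb.2 v j hzo.1
    have heqj := congrFun heq j
    simp only [Pi.add_apply] at heqj
    omega
end

section
/- Let G be a finite simple graph that is a domain, and let i, j, k be three mutually adjacent vertices of G (a triangle). Then none of the three edges {i,j}, {j,k}, {i,k} is an edge of G^{0-1}. -/
variable {V : Type*} [Fintype V] [DecidableEq V]

/-- For any non-isolated vertex `z`, there is a basic `1`-cover vanishing at `z`. -/
lemma exists_basic_one_cover_zero_at (G : SimpleGraph V) (z w : V) (hzw : G.Adj z w) :
    ∃ c : V → ℕ, IsBasicCover G 1 c ∧ c z = 0 := by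
  classical
  have hex : ∃ n : ℕ, ∃ c : V → ℕ, IsCover G 1 c ∧ c z = 0 ∧ ∑ v, c v = n := by
    refine ⟨_, fun v => if v = z then 0 else 1, ⟨?_, ?_⟩, by simp, rfl⟩
    · intro h0
      have := congrFun h0 w
      simp [hzw.ne'] at this
    · intro a b hab
      by_cases ha : a = z
      · by_cases hb : b = z
        · exact (hab.ne (ha.trans hb.symm)).elim
        · simp [ha, hb]
      · simp [ha]
  obtain ⟨c, hc_cov, hcz, hcsum⟩ := Nat.find_spec hex
  refine ⟨c, ⟨hc_cov, ?_⟩, hcz⟩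
  rintro ⟨b, e, hb, he, hbe⟩
  have hbz : b z = 0 := by
    have := congrFun hbe z
    simp only [Pi.add_apply] at this
    omega
  have hsum : ∑ v, c v = ∑ v, b v + ∑ v, e v := by
    rw [hbe]; simp [Finset.sum_add_distrib]
  have hepos : 0 < ∑ v, e v := by
    obtain ⟨v, hv⟩ := Function.ne_iff.mp he.1
    have : e v ≤ ∑ v, e v :=
      Finset.single_le_sum (fun i _ => Nat.zero_le _) (Finset.mem_univ v)
    simp only [Pi.zero_apply] at hv
    omega
  have hlt : ∑ v, b v < Nat.find hex := by omega
  exact Nat.find_min hex hlt ⟨b, hb, hbz, rfl⟩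

/-- If `x` and `y` have a common neighbour `z`, then `{x,y}` is not an edge of `G^{0-1}`. -/
lemma not_zeroOne_adj_of_common_neighbor (G : SimpleGraph V) {x y z : V}
    (hxz : G.Adj x z) (hyz : G.Adj y z) : ¬ (ZeroOne G).Adj x y := by
  rintro ⟨-, hall⟩
  obtain ⟨c, hc, hcz⟩ := exists_basic_one_cover_zero_at G z x hxz.symm
  have h1 : 1 ≤ c x + c z := hc.1.2 x z hxz
  have h2 : 1 ≤ c y + c z := hc.1.2 y z hyz
  have h3 := hall c hc
  omega

/-- If `G` is a domain and `i, j, k` form a triangle in `G`, then none of the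
three edges `{i, j}`, `{j, k}`, `{i, k}` is an edge of `G^{0-1}`. -/
theorem triangle_edges_not_in_zeroOne (G : SimpleGraph V) (hG : IsGraphDomain G)
    (i j k : V) (hij : G.Adj i j) (hjk : G.Adj j k) (hik : G.Adj i k) :
    ¬ (ZeroOne G).Adj i j ∧ ¬ (ZeroOne G).Adj j k ∧ ¬ (ZeroOne G).Adj i k := by
  exact ⟨not_zeroOne_adj_of_common_neighbor G hik hjk,
    not_zeroOne_adj_of_common_neighbor G hij.symm hik.symm,
    not_zeroOne_adj_of_common_neighbor G hij hjk.symm⟩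
end

section
/- Let G be a finite simple graph with at least one vertex and no isolated vertices. If for every integer k ≥ 1 all basic k-covers of G have the same norm, then G is an unmixed domain (i.e., G is unmixed and G is a domain). -/
variable {V : Type*} [Fintype V] [DecidableEq V]

private lemma tight_edge {G : SimpleGraph V} (hiso : ∀ v : V, ∃ w, G.Adj v w) {k : ℕ}
    (hk : 1 ≤ k) {b : V → ℕ} (hb : IsBasicCover G k b) {v : V} (hv : 1 ≤ b v) :
    ∃ w, G.Adj v w ∧ b v + b w = k := by
  by_contra hno
  push_neg at hno
  set b' : V → ℕ := Function.update b v (b v - 1) with hb'def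
  have hbv' : ∀ u, u ≠ v → b' u = b u := fun u hu => Function.update_of_ne hu _ _
  have hvv : b' v = b v - 1 := Function.update_self _ _ _
  have hb'ne : b' ≠ 0 := by
    intro h0
    obtain ⟨w, hw⟩ := hiso v
    have hwv : w ≠ v := hw.ne'
    have hbw : b w = 0 := by
      have := congrFun h0 w
      rw [hbv' w hwv] at this
      exact this
    have hcov := hb.1.2 v w hw
    have hbv1 : b v - 1 = 0 := by
      have := congrFun h0 v
      rwa [hvv] at this
    exact hno w hw (by omega)
  have hb'cov : IsCover G k b' := by
    refine ⟨hb'ne, ?_⟩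
    intro i j hij
    by_cases hi : i = v
    · subst hi
      have h1 := hb.1.2 i j hij
      have h2 := hno j hij
      rw [hvv, hbv' j hij.ne']
      omega
    · by_cases hj : j = v
      · subst hj
        have h1 := hb.1.2 i j hij
        have h2 := hno i hij.symm
        rw [hbv' i hi, hvv]
        omega
      · rw [hbv' i hi, hbv' j hj]
        exact hb.1.2 i j hij
  apply hb.2
  refine ⟨b', fun u => if u = v then 1 else 0, hb'cov,
    ⟨?_, fun _ _ _ => Nat.zero_le _⟩, ?_⟩
  · intro h0
    have := congrFun h0 v
    simp at this
  · funext u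
    by_cases hu : u = v
    · subst hu
      simp only [Pi.add_apply, hvv, if_true]
      omega
    · simp only [Pi.add_apply, hbv' u hu, if_neg hu, add_zero]

private lemma smul_basic {G : SimpleGraph V} (hiso : ∀ v : V, ∃ w, G.Adj v w)
    {c : V → ℕ} (hc : IsBasicCover G 1 c) {k : ℕ} (hk : 1 ≤ k) :
    IsBasicCover G k (fun v => k * c v) := by
  constructor
  · constructor
    · intro h0
      apply hc.1.1
      funext v
      have hkv := congrFun h0 v
      simp only [Pi.zero_apply] at hkv ⊢
      rcases Nat.mul_eq_zero.mp hkv with h | h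
      · omega
      · exact h
    · intro i j hij
      have h1 := hc.1.2 i j hij
      calc k = k * 1 := (mul_one k).symm
        _ ≤ k * (c i + c j) := Nat.mul_le_mul_left k h1
        _ = k * c i + k * c j := Nat.mul_add k _ _
  · rintro ⟨b, d, hbcov, hdcov, heq⟩
    obtain ⟨v, hv⟩ := Function.ne_iff.mp hdcov.1
    simp only [Pi.zero_apply] at hv
    have h1 := congrFun heq v
    have hcv : 1 ≤ c v := by
      by_contra hcon
      push_neg at hcon
      have hc0 : c v = 0 := by omega
      simp only [Pi.add_apply, hc0, Nat.mul_zero] at h1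
      omega
    obtain ⟨w, hw, hsum⟩ := tight_edge hiso le_rfl hc hcv
    have h2 := congrFun heq w
    simp only [Pi.add_apply] at h1 h2
    have h3 := hbcov.2 v w hw
    have hkk : k * c v + k * c w = k := by
      rw [← Nat.mul_add, hsum, mul_one]
    rw [h1, h2] at hkk
    omega

private lemma exists_basic_le_aux (G : SimpleGraph V) (k : ℕ) :
    ∀ n : ℕ, ∀ b : V → ℕ, IsCover G k b → ∑ v, b v ≤ n →
      ∃ b', IsBasicCover G k b' ∧ ∑ v, b' v ≤ ∑ v, b v := by
  intro n
  induction n with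
  | zero =>
    intro b hb hle
    exfalso
    obtain ⟨v, hv⟩ := Function.ne_iff.mp hb.1
    simp only [Pi.zero_apply] at hv
    have h1 : b v ≤ ∑ v, b v :=
      Finset.single_le_sum (fun i _ => Nat.zero_le _) (Finset.mem_univ v)
    omega
  | succ n ih =>
    intro b hb hle
    by_cases hbas : IsBasicCover G k b
    · exact ⟨b, hbas, le_rfl⟩
    · have hdec : ∃ b1 b2 : V → ℕ, IsCover G k b1 ∧ IsCover G 0 b2 ∧ b = b1 + b2 := by
        by_contra hcon
        exact hbas ⟨hb, hcon⟩
      obtain ⟨b1, b2, h1, h2, heq⟩ := hdec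
      obtain ⟨v, hv⟩ := Function.ne_iff.mp h2.1
      simp only [Pi.zero_apply] at hv
      have hsum : ∑ v, b v = ∑ v, b1 v + ∑ v, b2 v := by
        rw [heq]
        simp [Finset.sum_add_distrib]
      have hb2 : 1 ≤ ∑ v, b2 v :=
        le_trans (Nat.pos_of_ne_zero hv)
          (Finset.single_le_sum (fun i _ => Nat.zero_le _) (Finset.mem_univ v))
      obtain ⟨b', hb', hle'⟩ := ih b1 h1 (by omega)
      exact ⟨b', hb', by omega⟩

/-- Let `G` have at least one vertex and no isolated vertices.  If for every
`k ≥ 1` all basic `k`-covers of `G` have the same norm, then `G` is an unmixed domain. -/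
theorem equal_norms_imply_unmixed_domain [Nonempty V] (G : SimpleGraph V)
    (hiso : ∀ v : V, ∃ w, G.Adj v w)
    (h : ∀ k : ℕ, 1 ≤ k → ∀ a b : V → ℕ, IsBasicCover G k a → IsBasicCover G k b →
      ∑ v, a v = ∑ v, b v) :
    IsUnmixed G ∧ IsGraphDomain G := by
  classical
  have hcov1 : IsCover G 1 (fun _ => 1) := by
    refine ⟨?_, fun i j _ => by simp⟩
    intro h0
    have := congrFun h0 (Classical.arbitrary V)
    simp at this
  obtain ⟨c, hc, -⟩ :=
    exists_basic_le_aux G 1 (∑ _v : V, 1) (fun _ => 1) hcov1 le_rfl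
  refine ⟨fun a b ha hb => h 1 le_rfl a b ha hb, ?_⟩
  intro s t hst f g hf hg
  set k := s + 2 * t with hkdef
  have hk1 : 1 ≤ k := by omega
  have hν1 : 1 ≤ ∑ v, c v := by
    obtain ⟨v, hv⟩ := Function.ne_iff.mp hc.1.1
    simp only [Pi.zero_apply] at hv
    exact le_trans (Nat.pos_of_ne_zero hv)
      (Finset.single_le_sum (fun i _ => Nat.zero_le _) (Finset.mem_univ v))
  have hkc : IsBasicCover G k (fun v => k * c v) := smul_basic hiso hc hk1
  have h2c : IsBasicCover G 2 (fun v => 2 * c v) := smul_basic hiso hc (by norm_num)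
  have hνk : ∑ v, k * c v = k * ∑ v, c v := by rw [Finset.mul_sum]
  have hf' : ∀ p, ∑ v, f p v = ∑ v, c v := fun p => h 1 le_rfl (f p) c (hf p) hc
  have hg' : ∀ q, ∑ v, g q v = 2 * ∑ v, c v := fun q => by
    rw [h 2 (by norm_num) (g q) (fun v => 2 * c v) (hg q) h2c, Finset.mul_sum]
  have htot : ∑ v, ((∑ p, f p) + (∑ q, g q)) v = k * ∑ v, c v := by
    simp only [Pi.add_apply, Finset.sum_apply, Finset.sum_add_distrib]
    rw [Finset.sum_comm, Finset.sum_comm (γ := V)]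
    have e1 : ∑ p : Fin s, ∑ v, f p v = s * ∑ v, c v := by
      simp [hf', Finset.sum_const]
    have e2 : ∑ q : Fin t, ∑ v, g q v = t * (2 * ∑ v, c v) := by
      simp [hg', Finset.sum_const]
    rw [e1, e2, hkdef]
    ring
  have hacov : IsCover G k ((∑ p, f p) + (∑ q, g q)) := by
    constructor
    · intro h0
      have hz : ∑ v, ((∑ p, f p) + (∑ q, g q)) v = 0 := by
        rw [h0]
        simp
      rw [htot] at hz
      rcases Nat.mul_eq_zero.mp hz with hcon | hcon <;> omega
    · intro i j hij
      have hfs : s ≤ ∑ p, (f p i + f p j) := by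
        calc s = ∑ _p : Fin s, 1 := by simp
          _ ≤ _ := Finset.sum_le_sum fun p _ => (hf p).1.2 i j hij
      have hgs : 2 * t ≤ ∑ q, (g q i + g q j) := by
        calc 2 * t = ∑ _q : Fin t, 2 := by simp [mul_comm]
          _ ≤ _ := Finset.sum_le_sum fun q _ => (hg q).1.2 i j hij
      simp only [Pi.add_apply, Finset.sum_apply]
      rw [Finset.sum_add_distrib] at hfs hgs
      omega
  refine ⟨hacov, ?_⟩
  rintro ⟨b, d, hbcov, hdcov, heq⟩
  obtain ⟨b', hb', hble⟩ := exists_basic_le_aux G k (∑ v, b v) b hbcov le_rfl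
  have hb'n : ∑ v, b' v = k * ∑ v, c v := by
    rw [h k hk1 b' (fun v => k * c v) hb' hkc, hνk]
  obtain ⟨v, hv⟩ := Function.ne_iff.mp hdcov.1
  simp only [Pi.zero_apply] at hv
  have hd1 : 1 ≤ ∑ v, d v :=
    le_trans (Nat.pos_of_ne_zero hv)
      (Finset.single_le_sum (fun i _ => Nat.zero_le _) (Finset.mem_univ v))
  have hsplit : ∑ v, ((∑ p, f p) + (∑ q, g q)) v = ∑ v, b v + ∑ v, d v := by
    rw [heq]
    simp [Finset.sum_add_distrib]
  omega
end

section
/- Let G be a finite simple graph with n vertices, none of them isolated. If G admits a perfect matching and every basic 1-cover of G has norm n/2 (twice its norm equals n), then G satisfies MSC. -/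
variable {V : Type*} [Fintype V] [DecidableEq V]

lemma exists_maximal_indep (G : SimpleGraph V) (T : Finset V)
    (hT : ∀ x ∈ T, ∀ y ∈ T, ¬ G.Adj x y) :
    ∃ S : Finset V, T ⊆ S ∧ (∀ x ∈ S, ∀ y ∈ S, ¬ G.Adj x y) ∧
      ∀ v, v ∉ S → ∃ w ∈ S, G.Adj v w := by
  classical
  set 𝒮 : Finset (Finset V) :=
    Finset.univ.powerset.filter (fun S => T ⊆ S ∧ ∀ x ∈ S, ∀ y ∈ S, ¬ G.Adj x y) with h𝒮
  have hmem : ∀ S : Finset V, S ∈ 𝒮 ↔ (T ⊆ S ∧ ∀ x ∈ S, ∀ y ∈ S, ¬ G.Adj x y) := by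
    intro S
    simp [h𝒮, Finset.mem_filter, Finset.mem_powerset]
  have hne : 𝒮.Nonempty := ⟨T, (hmem T).2 ⟨le_refl _, hT⟩⟩
  obtain ⟨S, hS, hmax⟩ : ∃ S ∈ 𝒮, ∀ x ∈ 𝒮, ¬ S < x := by
    obtain ⟨S, hS⟩ := Finset.exists_maximal hne
    exact ⟨S, hS.1, fun x hx hlt => not_le_of_gt hlt (hS.2 hx hlt.le)⟩
  obtain ⟨hTS, hind⟩ := (hmem S).1 hS
  refine ⟨S, hTS, hind, ?_⟩
  intro v hv
  by_contra hno
  push_neg at hno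
  have hins : insert v S ∈ 𝒮 := by
    refine (hmem _).2 ⟨hTS.trans (Finset.subset_insert _ _), ?_⟩
    intro x hx y hy
    rcases Finset.mem_insert.1 hx with hx1 | hx1
    · rcases Finset.mem_insert.1 hy with hy1 | hy1
      · rw [hx1, hy1]; exact G.irrefl
      · rw [hx1]; exact hno y hy1
    · rcases Finset.mem_insert.1 hy with hy1 | hy1
      · rw [hy1]; intro hc; exact hno x hx1 hc.symm
      · exact hind x hx1 y hy1
  exact hmax _ hins (Finset.ssubset_insert hv)

/-- Let `G` have `n` vertices, none of them isolated.  If `G` admits a perfect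
matching and every basic `1`-cover of `G` has norm `n / 2` (twice its norm equals `n`),
then `G` satisfies MSC. -/
theorem matching_and_norms_imply_msc [Nonempty V] (G : SimpleGraph V)
    (hiso : ∀ v : V, ∃ w, G.Adj v w)
    (hm : ∃ M : G.Subgraph, M.IsPerfectMatching)
    (h : ∀ a : V → ℕ, IsBasicCover G 1 a → 2 * (∑ v, a v) = Fintype.card V) :
    SatisfiesMSC G := by
  classical
  obtain ⟨M, hM⟩ := hm
  refine ⟨M, ?_, ?_, hM.1, ?_⟩
  · ext v
    simp only [Set.mem_setOf_eq]
    exact ⟨fun _ => hiso v, fun _ => hM.2 v⟩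
  · exact ⟨Classical.arbitrary V, hM.2 _⟩
  · intro i j hij i' j' hii' hjj'
    by_contra hadj
    -- T = {i', j'} is independent
    have hT : ∀ x ∈ ({i', j'} : Finset V), ∀ y ∈ ({i', j'} : Finset V), ¬ G.Adj x y := by
      intro x hx y hy
      rcases Finset.mem_insert.1 hx with hx1 | hx1
      · rcases Finset.mem_insert.1 hy with hy1 | hy1
        · rw [hx1, hy1]; exact G.irrefl
        · rw [Finset.mem_singleton] at hy1; rw [hx1, hy1]; exact hadj
      · rw [Finset.mem_singleton] at hx1
        rcases Finset.mem_insert.1 hy with hy1 | hy1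
        · rw [hx1, hy1]; intro hc; exact hadj hc.symm
        · rw [Finset.mem_singleton] at hy1; rw [hx1, hy1]; exact G.irrefl
    obtain ⟨S, hTS, hind, hmax⟩ := exists_maximal_indep G {i', j'} hT
    have hi'S : i' ∈ S := hTS (Finset.mem_insert_self _ _)
    have hj'S : j' ∈ S := hTS (by simp)
    have hiS : i ∉ S := fun hi => hind i hi i' hi'S hii'
    have hjS : j ∉ S := fun hj => hind j hj j' hj'S hjj'
    set a : V → ℕ := fun v => if v ∈ S then 0 else 1 with ha
    have hcov : IsCover G 1 a := by
      constructor
      · intro h0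
        have := congrFun h0 i
        simp [ha, hiS] at this
      · intro x y hxy
        by_cases hx : x ∈ S
        · have hy : y ∉ S := fun hy => hind x hx y hy hxy
          simp [ha, hx, hy]
        · simp [ha, hx]
    have hbasic : IsBasicCover G 1 a := by
      refine ⟨hcov, ?_⟩
      rintro ⟨b, c, hb, hc, habc⟩
      obtain ⟨v, hv⟩ := Function.ne_iff.1 hc.1
      simp only [Pi.zero_apply] at hv
      have hav : a v = b v + c v := congrFun habc v
      have hvS : v ∉ S := by
        intro hvS
        simp [ha, hvS] at hav
        omega
      have hav1 : a v = 1 := by simp [ha, hvS]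
      obtain ⟨w, hwS, hvw⟩ := hmax v hvS
      have haw : a w = b w + c w := congrFun habc w
      have haw0 : a w = 0 := by simp [ha, hwS]
      have := hb.2 v w hvw
      omega
    have hn := h a hbasic
    -- the matching pairing function
    have hspec : ∀ v : V, M.Adj v ((hM.1 (hM.2 v)).choose) ∧
        ∀ y, M.Adj v y → y = (hM.1 (hM.2 v)).choose := fun v => (hM.1 (hM.2 v)).choose_spec
    set F : V → V := fun v => (hM.1 (hM.2 v)).choose with hF
    have hFadj : ∀ v, M.Adj v (F v) := fun v => (hspec v).1
    have hFuniq : ∀ v y, M.Adj v y → y = F v := fun v => (hspec v).2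
    have hFinv : Function.Involutive F := by
      intro v
      exact (hFuniq (F v) v (hFadj v).symm).symm
    have hFij : F i = j := (hFuniq i j hij).symm
    have hkey : ∀ v : V, 1 ≤ a v + a (F v) :=
      fun v => hcov.2 v (F v) (M.adj_sub (hFadj v))
    have hkey2 : 1 < a i + a (F i) := by
      rw [hFij]
      simp [ha, hiS, hjS]
    have hlt : Fintype.card V < ∑ v : V, (a v + a (F v)) := by
      have hcard : (Fintype.card V : ℕ) = ∑ _v : V, 1 := by simp
      rw [hcard]
      exact Finset.sum_lt_sum (fun v _ => hkey v) ⟨i, Finset.mem_univ i, hkey2⟩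
    have hsum : ∑ v : V, (a v + a (F v)) = 2 * ∑ v : V, a v := by
      have hbij : ∑ v : V, a (F v) = ∑ v : V, a v :=
        Fintype.sum_bijective F hFinv.bijective _ _ (fun v => rfl)
      rw [Finset.sum_add_distrib, hbij, two_mul]
    omega
end
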